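/- arXiv:math/0012017 — 7 statements merged into one kernel-verified Lean document; each statement's English description precedes it below -/
import Mathlib

section
/- Let C be a convex subset of a finite-dimensional real inner product space E, let u ∈ E be nonzero and H = {f ∈ E : ⟨f,u⟩ > 0} the corresponding open half-space, and let v ∈ E. Suppose there exists a point x ∈ C ∩ H with ⟨x,v⟩ = 0, and suppose ⟨y,v⟩ ≥ 0 for every y ∈ C ∩ H. Then ⟨y,v⟩ ≥ 0 for every y ∈ C. -/
open RealInnerProductSpace

/-- Let `C` be a convex set, `H = {f | ⟪f,u⟫ > 0}` an open half-space and `v` a vector.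
If the linear functional `⟪·,v⟫` is nonnegative on `C ∩ H` and vanishes at some point of
`C ∩ H`, then it is nonnegative on all of `C`. -/
theorem nonneg_on_halfspace_slice_of_vanishing_point
    {E : Type*} [NormedAddCommGroup E] [InnerProductSpace ℝ E] [FiniteDimensional ℝ E]
    (C : Set E) (hC : Convex ℝ C) (u : E) (hu : u ≠ 0) (v : E)
    (hx : ∃ x ∈ C, 0 < ⟪x, u⟫ ∧ ⟪x, v⟫ = 0)
    (hnn : ∀ y ∈ C, 0 < ⟪y, u⟫ → 0 ≤ ⟪y, v⟫) :
    ∀ y ∈ C, 0 ≤ ⟪y, v⟫ := by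
  obtain ⟨x, hxC, hxu, hxv⟩ := hx
  intro y hyC
  by_cases hb : 0 < ⟪y, u⟫
  · exact hnn y hyC hb
  push_neg at hb
  set a := ⟪x, u⟫ with ha
  set b := ⟪y, u⟫ with hbdef
  have hab : 0 < a - b := by linarith
  set t : ℝ := a / (2 * (a - b)) with ht
  have ht0 : 0 < t := div_pos hxu (by linarith)
  have ht1 : t < 1 := by
    rw [ht, div_lt_one (by linarith)]
    linarith
  have hzC : (1 - t) • x + t • y ∈ C := hC hxC hyC (by linarith) ht0.le (by ring)
  have hzu : 0 < ⟪(1 - t) • x + t • y, u⟫ := by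
    rw [inner_add_left, real_inner_smul_left, real_inner_smul_left]
    have : (1 - t) * a + t * b = a - t * (a - b) := by ring
    rw [← ha, ← hbdef, this, ht]
    have : a / (2 * (a - b)) * (a - b) = a / 2 := by
      field_simp
    rw [this]
    linarith
  have := hnn _ hzC hzu
  rw [inner_add_left, real_inner_smul_left, real_inner_smul_left, hxv, mul_zero,
    zero_add] at this
  exact nonneg_of_mul_nonneg_right this ht0
end

section
/- Let E be a finite-dimensional real inner product space with dim E ≥ 2. Let C ⊆ E be a convex cone of the form C = {t·k : t ≥ 0, k ∈ K} for some compact subset K of the unit sphere S, and assume C has nonempty interior. Suppose H¹, …, Hˢ are open half-spaces with C ∖ {0} ⊆ H¹ ∪ ⋯ ∪ Hˢ, and suppose that for each β ∈ {1,…,s} there are finitely many vectors v₁^β, …, v_{r(β)}^β ∈ E satisfying: (a) C ∩ H^β = (⋂_{i} {f ∈ E : ⟨f, v_i^β⟩ ≥ 0}) ∩ H^β, and (b) minimality: for each i there exists x ∈ C ∩ H^β with ⟨x, v_i^β⟩ = 0. Then C = ⋂_{i,β} {f ∈ E : ⟨f, v_i^β⟩ ≥ 0}; in particular C is a convex polyhedral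 cone. -/
open RealInnerProductSpace

/-- A convex cone `C` over a compact subset `K` of the unit sphere, with nonempty interior,
such that `C \ {0}` is covered by finitely many open half-spaces `H^β = {f | ⟪f, u β⟫ > 0}`,
and such that on each `H^β` the cone is cut out by finitely many inequalities
`⟪·, v β i⟫ ≥ 0` satisfying the minimality condition that each inequality vanishes at some
point of `C ∩ H^β`, is globally the intersection of all those half-space inequalities:
`C = ⋂_{i,β} {f | ⟪f, v β i⟫ ≥ 0}`. -/
theorem convex_cone_polyhedral_of_locally_polyhedral
    {E : Type*} [NormedAddCommGroup E] [InnerProductSpace ℝ E] [FiniteDimensional ℝ E]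
    (hdim : 2 ≤ Module.finrank ℝ E)
    (C : Set E)
    (hCadd : ∀ x ∈ C, ∀ y ∈ C, x + y ∈ C)
    (hCsmul : ∀ t : ℝ, 0 < t → ∀ x ∈ C, t • x ∈ C)
    (K : Set E) (hK : IsCompact K) (hKS : K ⊆ {f : E | ‖f‖ = 1})
    (hCK : C = {x : E | ∃ t : ℝ, 0 ≤ t ∧ ∃ k ∈ K, x = t • k})
    (hCint : (interior C).Nonempty)
    (s : ℕ) (u : Fin s → E) (hu : ∀ β, u β ≠ 0)
    (hcover : C \ {0} ⊆ ⋃ β, {f : E | 0 < ⟪f, u β⟫})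
    (r : Fin s → ℕ) (v : (β : Fin s) → Fin (r β) → E)
    (hcut : ∀ β, C ∩ {f : E | 0 < ⟪f, u β⟫} =
      (⋂ i, {f : E | 0 ≤ ⟪f, v β i⟫}) ∩ {f : E | 0 < ⟪f, u β⟫})
    (hmin : ∀ β i, ∃ x ∈ C ∩ {f : E | 0 < ⟪f, u β⟫}, ⟪x, v β i⟫ = 0) :
    C = ⋂ β, ⋂ i, {f : E | 0 ≤ ⟪f, v β i⟫} := by
  -- K is nonempty and 0 ∈ C
  have hKne : K.Nonempty := by
    obtain ⟨c, hc⟩ := hCint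
    have hcC : c ∈ C := interior_subset hc
    rw [hCK] at hcC
    obtain ⟨t, _, k, hk, _⟩ := hcC
    exact ⟨k, hk⟩
  have h0C : (0 : E) ∈ C := by
    obtain ⟨k, hk⟩ := hKne
    rw [hCK]
    exact ⟨0, le_refl 0, k, hk, by simp⟩
  -- Forward direction: every element of C satisfies all the inequalities.
  have hsubset : ∀ x ∈ C, ∀ β i, 0 ≤ ⟪x, v β i⟫ := by
    intro x hx β i
    obtain ⟨y, ⟨hyC, hyu⟩, hyv⟩ := hmin β i
    have hyu' : 0 < ⟪y, u β⟫ := hyu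
    set t : ℝ := (1 + |⟪x, u β⟫|) / ⟪y, u β⟫ with ht
    have htpos : 0 < t := div_pos (by positivity) hyu'
    have hz : x + t • y ∈ C ∩ {f : E | 0 < ⟪f, u β⟫} := by
      refine ⟨hCadd x hx (t • y) (hCsmul t htpos y hyC), ?_⟩
      have heq : ⟪x + t • y, u β⟫ = ⟪x, u β⟫ + t * ⟪y, u β⟫ := by
        rw [inner_add_left, real_inner_smul_left]
      have hcalc : t * ⟪y, u β⟫ = 1 + |⟪x, u β⟫| := by
        rw [ht, div_mul_cancel₀ _ (ne_of_gt hyu')]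
      have habs := neg_abs_le ⟪x, u β⟫
      simp only [Set.mem_setOf_eq]
      rw [heq, hcalc]
      linarith
    rw [hcut β] at hz
    have hi := Set.mem_iInter.mp hz.1 i
    simp only [Set.mem_setOf_eq, inner_add_left, real_inner_smul_left, hyv, mul_zero,
      add_zero] at hi
    exact hi
  -- C is closed.
  have hCclosed : IsClosed C := by
    rw [← closure_subset_iff_isClosed]
    intro x hx
    rcases mem_closure_iff_seq_limit.mp hx with ⟨f, hfC, hfx⟩
    have hmem : ∀ n, ∃ t : ℝ, 0 ≤ t ∧ ∃ k ∈ K, f n = t • k := fun n => by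
      have := hfC n; rwa [hCK] at this
    choose t ht k hkK hfk using hmem
    have hnorm : ∀ n, ‖f n‖ = t n := fun n => by
      rw [hfk n, norm_smul, hKS (hkK n), mul_one, Real.norm_eq_abs, abs_of_nonneg (ht n)]
    have htt : Filter.Tendsto t Filter.atTop (nhds ‖x‖) := by
      have := hfx.norm
      exact this.congr fun n => hnorm n
    obtain ⟨k₀, hk₀K, φ, hφ, hkk⟩ := hK.tendsto_subseq hkK
    have h1 : Filter.Tendsto (fun n => t (φ n) • k (φ n)) Filter.atTop (nhds (‖x‖ • k₀)) :=
      (htt.comp hφ.tendsto_atTop).smul hkk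
    have h2 : Filter.Tendsto (fun n => t (φ n) • k (φ n)) Filter.atTop (nhds x) := by
      have := hfx.comp hφ.tendsto_atTop
      exact this.congr fun n => hfk (φ n)
    have hxeq : x = ‖x‖ • k₀ := tendsto_nhds_unique h2 h1
    rw [hCK]
    exact ⟨‖x‖, norm_nonneg x, k₀, hk₀K, hxeq⟩
  -- Now prove the equality.
  apply Set.eq_of_subset_of_subset
  · intro x hx
    exact Set.mem_iInter.mpr fun β => Set.mem_iInter.mpr fun i => hsubset x hx β i
  · intro x hx
    have hxv : ∀ β i, 0 ≤ ⟪x, v β i⟫ := fun β i =>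
      Set.mem_iInter.mp (Set.mem_iInter.mp hx β) i
    by_contra hxC
    have hxne : x ≠ 0 := fun h => hxC (h ▸ h0C)
    -- find an interior point not on the line through x
    have hnotsub : ¬ interior C ⊆ (Submodule.span ℝ {x} : Submodule ℝ E) := by
      intro hsub
      have hio : (interior ((Submodule.span ℝ {x} : Submodule ℝ E) : Set E)).Nonempty := by
        obtain ⟨c, hc⟩ := hCint
        exact ⟨c, (interior_mono hsub) (by rwa [interior_interior])⟩
      have htop : (Submodule.span ℝ {x} : Submodule ℝ E) = ⊤ :=
        Submodule.eq_top_of_nonempty_interior' _ hio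
      have h1 : Module.finrank ℝ (Submodule.span ℝ {x} : Submodule ℝ E) = 1 :=
        finrank_span_singleton hxne
      rw [htop] at h1
      rw [finrank_top] at h1
      omega
    obtain ⟨x₀, hx₀int, hx₀span⟩ := Set.not_subset.mp hnotsub
    have hx₀C : x₀ ∈ C := interior_subset hx₀int
    have hx₀ne : x₀ ≠ 0 := fun h => hx₀span (h ▸ Submodule.zero_mem _)
    -- the segment
    set γ : ℝ → E := fun t => x₀ + t • (x - x₀) with hγ
    have hγcont : Continuous γ := by
      apply continuous_const.add
      exact continuous_id.smul continuous_const
    set T : Set ℝ := Set.Icc 0 1 ∩ γ ⁻¹' C with hT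
    have hTclosed : IsClosed T := isClosed_Icc.inter (hCclosed.preimage hγcont)
    have hTsub : T ⊆ Set.Icc 0 1 := Set.inter_subset_left
    have hTcomp : IsCompact T := isCompact_Icc.of_isClosed_subset hTclosed hTsub
    have hTne : T.Nonempty := ⟨0, by
      constructor
      · exact ⟨le_refl 0, zero_le_one⟩
      · simp only [Set.mem_preimage, hγ, zero_smul, add_zero]
        exact hx₀C⟩
    set τ : ℝ := sSup T with hτ
    have hτT : τ ∈ T := hTcomp.sSup_mem hTne
    have hτ0 : 0 ≤ τ := (hTsub hτT).1
    have hτ1 : τ ≤ 1 := (hTsub hτT).2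
    have hyC : γ τ ∈ C := hτT.2
    have hτne1 : τ ≠ 1 := by
      intro h
      apply hxC
      have : γ τ = x := by simp [hγ, h]
      rwa [this] at hyC
    have hτlt1 : τ < 1 := lt_of_le_of_ne hτ1 hτne1
    have hyne : γ τ ≠ 0 := by
      intro h
      apply hx₀span
      have heq : (1 - τ) • x₀ + τ • x = 0 := by
        have : γ τ = x₀ + τ • x - τ • x₀ := by
          rw [hγ]; simp [smul_sub]; abel
        rw [this] at h
        rw [sub_smul, one_smul]
        rw [← h]; abel
      have hx₀eq : x₀ = ((1 - τ)⁻¹ * (-τ)) • x := by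
        have h1τ : (1 : ℝ) - τ ≠ 0 := by linarith
        have : (1 - τ) • x₀ = (-τ) • x := by
          rw [neg_smul]
          linear_combination (norm := module) heq
        rw [mul_smul, ← this, inv_smul_smul₀ h1τ]
      rw [hx₀eq]
      exact Submodule.smul_mem _ _ (Submodule.mem_span_singleton_self x)
    -- γ τ lies in some halfspace
    have hycov : γ τ ∈ ⋃ β, {f : E | 0 < ⟪f, u β⟫} := hcover ⟨hyC, hyne⟩
    obtain ⟨Sβ, ⟨β, rfl⟩, hyu⟩ := hycov
    have hyu' : (0 : ℝ) < ⟪γ τ, u β⟫ := hyu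
    -- pick a point slightly beyond τ, still in the halfspace
    have hopen : IsOpen {t : ℝ | 0 < ⟪γ t, u β⟫} := by
      have : Continuous fun t : ℝ => ⟪γ t, u β⟫ :=
        (continuous_inner.comp (hγcont.prodMk continuous_const))
      exact isOpen_lt continuous_const this
    obtain ⟨δ, hδpos, hδ⟩ := Metric.isOpen_iff.mp hopen τ hyu'
    set ε : ℝ := min (δ / 2) ((1 - τ) / 2) with hε
    have hεpos : 0 < ε := lt_min (by linarith) (by linarith)
    set σ : ℝ := τ + ε with hσ
    have hσball : σ ∈ Metric.ball τ δ := by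
      rw [Metric.mem_ball, hσ, Real.dist_eq]
      have h1 : ε ≤ δ / 2 := min_le_left _ _
      have : |τ + ε - τ| = ε := by rw [add_sub_cancel_left, abs_of_pos hεpos]
      rw [this]; linarith
    have hσu : (0 : ℝ) < ⟪γ σ, u β⟫ := hδ hσball
    have hσle1 : σ ≤ 1 := by
      have : ε ≤ (1 - τ) / 2 := min_le_right _ _
      rw [hσ]; linarith
    have hσ0 : 0 ≤ σ := by rw [hσ]; linarith
    have hσnotC : γ σ ∉ C := by
      intro h
      have hσT : σ ∈ T := ⟨⟨hσ0, hσle1⟩, h⟩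
      have : σ ≤ τ := le_csSup hTcomp.bddAbove hσT
      rw [hσ] at this; linarith
    -- so some inequality fails at γ σ
    have : ∃ i, ⟪γ σ, v β i⟫ < 0 := by
      by_contra hcon
      push_neg at hcon
      apply hσnotC
      have : γ σ ∈ (⋂ i, {f : E | 0 ≤ ⟪f, v β i⟫}) ∩ {f : E | 0 < ⟪f, u β⟫} :=
        ⟨Set.mem_iInter.mpr fun i => hcon i, hσu⟩
      rw [← hcut β] at this
      exact this.1
    obtain ⟨i, hineg⟩ := this
    -- but it cannot fail: both endpoints satisfy it
    have hx₀v : 0 ≤ ⟪x₀, v β i⟫ := hsubset x₀ hx₀C β i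
    have hxvi : 0 ≤ ⟪x, v β i⟫ := hxv β i
    have hval : ⟪γ σ, v β i⟫ = (1 - σ) * ⟪x₀, v β i⟫ + σ * ⟪x, v β i⟫ := by
      rw [hγ]
      simp only [inner_add_left, real_inner_smul_left, inner_sub_left]
      ring
    rw [hval] at hineg
    nlinarith
end

section
/- Let E be a real inner product space with dim E ≥ 2, let S = {f ∈ E : ‖f‖ = 1} be its unit sphere with the angular distance d_S(x,y) = arccos⟨x,y⟩, and let a < b be real numbers. Suppose c : [a,b] → S is a map such that every t ∈ [a,b] has ε > 0 with d_S(c(s), c(s')) = |s − s'| for all s, s' ∈ [a,b] ∩ (t−ε, t+ε). Then there exist orthonormal vectors p, q ∈ E such that c(t) = cos(t−a)·p + sin(t−a)·q for all t ∈ [a,b]; in particular, the image of c is contained in a great circle {cos t·p + sin t·q : t ∈ ℝ}. -/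
open RealInnerProductSpace

section GreatCircleAux

variable {E : Type*} [NormedAddCommGroup E] [InnerProductSpace ℝ E]

/-- Solving a 2×2 linear system with trigonometric coefficients. -/
private lemma gc_solve2 {α β : ℝ} (h : Real.sin (β - α) ≠ 0) {u w u' w' : E}
    (h1 : Real.cos α • u + Real.sin α • w = Real.cos α • u' + Real.sin α • w')
    (h2 : Real.cos β • u + Real.sin β • w = Real.cos β • u' + Real.sin β • w') :
    u = u' ∧ w = w' := by
  have hs := Real.sin_sub β α
  constructor
  · have key : Real.sin (β - α) • (u - u') = 0 := by
      rw [hs]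
      linear_combination (norm := module) Real.sin β • h1 - Real.sin α • h2
    rcases smul_eq_zero.1 key with h' | h'
    · exact absurd h' h
    · exact sub_eq_zero.1 h'
  · have key : Real.sin (β - α) • (w - w') = 0 := by
      rw [hs]
      linear_combination (norm := module) Real.cos α • h2 - Real.cos β • h1
    rcases smul_eq_zero.1 key with h' | h'
    · exact absurd h' h
    · exact sub_eq_zero.1 h'

private lemma gc_eq_of_inner {x y : E} {r : ℝ}
    (hxx : ⟪x, x⟫ = r) (hxy : ⟪x, y⟫ = r) (hyy : ⟪y, y⟫ = r) : x = y := by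
  have h : ⟪x - y, x - y⟫ = (0 : ℝ) := by
    rw [inner_sub_left, inner_sub_right, inner_sub_right, hxx, hxy, hyy, real_inner_comm x y, hxy]
    ring
  exact sub_eq_zero.1 (inner_self_eq_zero.1 h)

private lemma gc_fdecomp (p q : E) (x y : ℝ) :
    Real.cos (x + y) • p + Real.sin (x + y) • q =
      Real.cos x • (Real.cos y • p + Real.sin y • q) +
        Real.sin x • ((-Real.sin y) • p + Real.cos y • q) := by
  rw [Real.cos_add, Real.sin_add]
  module

private lemma gc_window {a b : ℝ} {c : ℝ → E}
    (hcS : ∀ t ∈ Set.Icc a b, ‖c t‖ = 1) {t : ℝ} (ht : t ∈ Set.Icc a b) (hta : a < b)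
    {ε : ℝ} (hε0 : 0 < ε) (hεπ : ε ≤ Real.pi / 2)
    (hiso : ∀ s ∈ Set.Icc a b, ∀ s' ∈ Set.Icc a b,
      |s - t| < ε → |s' - t| < ε → ⟪c s, c s'⟫ = Real.cos (s - s')) :
    ∃ w : E, ‖w‖ = 1 ∧ ⟪c t, w⟫ = 0 ∧ ∀ s ∈ Set.Icc a b, |s - t| < ε →
      c s = Real.cos (s - t) • c t + Real.sin (s - t) • w := by
  have hπ : (0:ℝ) < Real.pi := Real.pi_pos
  have htε : |t - t| < ε := by simpa using hε0
  -- inner products of the "velocity part"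
  have hv : ∀ s ∈ Set.Icc a b, ∀ s' ∈ Set.Icc a b, |s - t| < ε → |s' - t| < ε →
      ⟪c s - Real.cos (s - t) • c t, c s' - Real.cos (s' - t) • c t⟫ =
        Real.sin (s - t) * Real.sin (s' - t) := by
    intro s hs s' hs' hsε hs'ε
    have h1 := hiso s hs s' hs' hsε hs'ε
    have h2 := hiso s hs t ht hsε htε
    have h3 := hiso t ht s' hs' htε hs'ε
    have h4 := hiso t ht t ht htε htε
    simp only [inner_sub_left, inner_sub_right, real_inner_smul_left, real_inner_smul_right]
    rw [h1, h2, h3, h4]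
    have hcs : Real.cos ((s - t) - (s' - t)) =
        Real.cos (s - t) * Real.cos (s' - t) + Real.sin (s - t) * Real.sin (s' - t) :=
      Real.cos_sub _ _
    rw [show s - s' = (s - t) - (s' - t) by ring] at *
    rw [show t - s' = -(s' - t) by ring, Real.cos_neg, show t - t = 0 by ring, Real.cos_zero]
    linear_combination hcs
  -- pick an auxiliary point s₀ ≠ t in the window
  obtain ⟨s₀, hs₀ab, hs₀ne, hs₀ε⟩ :
      ∃ s₀ ∈ Set.Icc a b, s₀ ≠ t ∧ |s₀ - t| < ε := by
    rcases lt_or_ge t b with h | h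
    · refine ⟨min b (t + ε / 2), ⟨le_min (le_of_lt hta) (by linarith [ht.1]), min_le_left _ _⟩,
        ?_, ?_⟩
      · have : t < min b (t + ε / 2) := lt_min h (by linarith)
        exact (ne_of_gt this)
      · have h1 : min b (t + ε / 2) ≤ t + ε / 2 := min_le_right _ _
        have h2 : t < min b (t + ε / 2) := lt_min h (by linarith)
        rw [abs_lt]; constructor <;> linarith
    · have htb : t = b := le_antisymm ht.2 h
      refine ⟨max a (t - ε / 2), ⟨le_max_left _ _,
        max_le (le_of_lt (by linarith)) (by linarith [ht.2])⟩, ?_, ?_⟩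
      · have : max a (t - ε / 2) < t := max_lt (by linarith) (by linarith)
        exact ne_of_lt this
      · have h1 : t - ε / 2 ≤ max a (t - ε / 2) := le_max_right _ _
        have h2 : max a (t - ε / 2) < t := max_lt (by linarith) (by linarith)
        rw [abs_lt]; constructor <;> linarith
  have hσ : Real.sin (s₀ - t) ≠ 0 := by
    have h1 : -Real.pi < s₀ - t := by
      have := abs_lt.1 hs₀ε; linarith
    have h2 : s₀ - t < Real.pi := by
      have := abs_lt.1 hs₀ε; linarith
    exact fun hz => hs₀ne (sub_eq_zero.1 ((Real.sin_eq_zero_iff_of_lt_of_lt h1 h2).1 hz))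
  set σ := Real.sin (s₀ - t) with hσdef
  set v := c s₀ - Real.cos (s₀ - t) • c t with hvdef
  refine ⟨σ⁻¹ • v, ?_, ?_, ?_⟩
  · -- norm one
    have hvv : ⟪v, v⟫ = σ * σ := hv s₀ hs₀ab s₀ hs₀ab hs₀ε hs₀ε
    have : ‖σ⁻¹ • v‖ ^ 2 = 1 := by
      rw [← real_inner_self_eq_norm_sq, real_inner_smul_left, real_inner_smul_right, hvv]
      field_simp
    nlinarith [norm_nonneg (σ⁻¹ • v), this]
  · -- orthogonality
    have h2 := hiso t ht s₀ hs₀ab htε hs₀ε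
    have h4 := hiso t ht t ht htε htε
    rw [real_inner_smul_right, hvdef, inner_sub_right, real_inner_smul_right, h2, h4]
    rw [show t - s₀ = -(s₀ - t) by ring, Real.cos_neg, show t - t = 0 by ring, Real.cos_zero]
    ring
  · -- the formula
    intro s hs hsε
    have hvs : ⟪c s - Real.cos (s - t) • c t, c s - Real.cos (s - t) • c t⟫ =
        Real.sin (s - t) * Real.sin (s - t) := hv s hs s hs hsε hsε
    have hvs₀ : ⟪c s - Real.cos (s - t) • c t, v⟫ = Real.sin (s - t) * σ :=
      hv s hs s₀ hs₀ab hsε hs₀ε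
    have hvw : ⟪c s - Real.cos (s - t) • c t, σ⁻¹ • v⟫ = Real.sin (s - t) := by
      rw [real_inner_smul_right, hvs₀]; field_simp
    have hww : ⟪(σ⁻¹ • v : E), σ⁻¹ • v⟫ = 1 := by
      have hvv : ⟪v, v⟫ = σ * σ := hv s₀ hs₀ab s₀ hs₀ab hs₀ε hs₀ε
      rw [real_inner_smul_left, real_inner_smul_right, hvv]; field_simp
    have hxy : ⟪c s - Real.cos (s - t) • c t, Real.sin (s - t) • (σ⁻¹ • v)⟫ =
        Real.sin (s - t) * Real.sin (s - t) := by
      rw [real_inner_smul_right, hvw]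
    have hyy : ⟪(Real.sin (s - t) • (σ⁻¹ • v) : E), Real.sin (s - t) • (σ⁻¹ • v)⟫ =
        Real.sin (s - t) * Real.sin (s - t) := by
      rw [real_inner_smul_left, real_inner_smul_right, hww]; ring
    have hxy' : c s - Real.cos (s - t) • c t = Real.sin (s - t) • (σ⁻¹ • v) :=
      gc_eq_of_inner hvs hxy hyy
    exact sub_eq_iff_eq_add'.1 hxy'

end GreatCircleAux

/-- A locally unit-speed, locally distance-preserving curve `c : [a,b] → S` in the unit
sphere of a real inner product space of dimension at least 2 (with the angular distance
`d_S(x,y) = arccos ⟪x,y⟫`) parametrizes an arc of a great circle: there are orthonormal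
vectors `p, q` with `c t = cos (t-a) • p + sin (t-a) • q` for all `t ∈ [a,b]`. -/
theorem local_isometry_into_sphere_is_great_circle_arc
    {E : Type*} [NormedAddCommGroup E] [InnerProductSpace ℝ E]
    (hdim : 2 ≤ Module.rank ℝ E)
    (a b : ℝ) (hab : a < b) (c : ℝ → E)
    (hcS : ∀ t ∈ Set.Icc a b, ‖c t‖ = 1)
    (hloc : ∀ t ∈ Set.Icc a b, ∃ ε > 0, ∀ s ∈ Set.Icc a b, ∀ s' ∈ Set.Icc a b,
      |s - t| < ε → |s' - t| < ε → Real.arccos ⟪c s, c s'⟫ = |s - s'|) :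
    ∃ p q : E, ‖p‖ = 1 ∧ ‖q‖ = 1 ∧ ⟪p, q⟫ = 0 ∧
      ∀ t ∈ Set.Icc a b, c t = Real.cos (t - a) • p + Real.sin (t - a) • q := by
  have hπ : (0:ℝ) < Real.pi := Real.pi_pos
  -- upgrade `hloc` to yield windows with ε ≤ π/2 and cosine form
  have hwin : ∀ t ∈ Set.Icc a b, ∃ ε > 0, ε ≤ Real.pi / 2 ∧ ∃ w : E, ‖w‖ = 1 ∧ ⟪c t, w⟫ = 0 ∧
      ∀ s ∈ Set.Icc a b, |s - t| < ε →
        c s = Real.cos (s - t) • c t + Real.sin (s - t) • w := by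
    intro t ht
    obtain ⟨ε₀, hε₀, hloc'⟩ := hloc t ht
    set ε := min ε₀ (Real.pi / 2) with hεdef
    have hε0 : 0 < ε := lt_min hε₀ (by linarith)
    have hεπ : ε ≤ Real.pi / 2 := min_le_right _ _
    have hiso : ∀ s ∈ Set.Icc a b, ∀ s' ∈ Set.Icc a b,
        |s - t| < ε → |s' - t| < ε → ⟪c s, c s'⟫ = Real.cos (s - s') := by
      intro s hs s' hs' hsε hs'ε
      have h := hloc' s hs s' hs' (lt_of_lt_of_le hsε (min_le_left _ _))
        (lt_of_lt_of_le hs'ε (min_le_left _ _))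
      have hb : |⟪c s, c s'⟫| ≤ 1 := by
        have := abs_real_inner_le_norm (c s) (c s')
        rw [hcS s hs, hcS s' hs'] at this; simpa using this
      have := congrArg Real.cos h
      rw [Real.cos_arccos (by linarith [abs_le.1 hb]) (by linarith [abs_le.1 hb])] at this
      rw [this, Real.cos_abs]
    obtain ⟨w, hw1, hw2, hw3⟩ := gc_window hcS ht hab hε0 hεπ hiso
    exact ⟨ε, hε0, hεπ, w, hw1, hw2, hw3⟩
  have haab : a ∈ Set.Icc a b := ⟨le_refl a, le_of_lt hab⟩
  obtain ⟨εa, hεa0, hεaπ, q, hq1, hq2, hqf⟩ := hwin a haab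
  set p := c a with hpdef
  refine ⟨p, q, hcS a haab, hq1, hq2, ?_⟩
  -- the set where the formula holds from the start
  set A : Set ℝ := {t | t ∈ Set.Icc a b ∧ ∀ s ∈ Set.Icc a t,
    c s = Real.cos (s - a) • p + Real.sin (s - a) • q} with hAdef
  have hAsub : ∀ x ∈ A, x ≤ b := fun x hx => hx.1.2
  have hAbdd : BddAbove A := ⟨b, fun x hx => hAsub x hx⟩
  set t₁ := min b (a + εa / 2) with ht₁def
  have ht₁a : a < t₁ := lt_min hab (by linarith)
  have ht₁A : t₁ ∈ A := by
    constructor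
    · exact ⟨le_of_lt ht₁a, min_le_left _ _⟩
    · intro s hs
      have hsab : s ∈ Set.Icc a b := ⟨hs.1, le_trans hs.2 (min_le_left _ _)⟩
      have hsε : |s - a| < εa := by
        have h1 : s ≤ a + εa / 2 := le_trans hs.2 (min_le_right _ _)
        rw [abs_lt]; constructor <;> [linarith [hs.1]; linarith]
      exact hqf s hsab hsε
  have hAne : A.Nonempty := ⟨t₁, ht₁A⟩
  set T := sSup A with hTdef
  have hTt₁ : t₁ ≤ T := le_csSup hAbdd ht₁A
  have hTa : a < T := lt_of_lt_of_le ht₁a hTt₁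
  have hTb : T ≤ b := csSup_le hAne hAsub
  have hbelow : ∀ s, a ≤ s → s < T → c s = Real.cos (s - a) • p + Real.sin (s - a) • q := by
    intro s hsa hsT
    obtain ⟨x, hxA, hsx⟩ := exists_lt_of_lt_csSup hAne hsT
    exact hxA.2 s ⟨hsa, le_of_lt hsx⟩
  have hTab : T ∈ Set.Icc a b := ⟨le_of_lt hTa, hTb⟩
  obtain ⟨ε, hε0, hεπ, w, hw1, hw2, hwf⟩ := hwin T hTab
  set δ := min ε (T - a) with hδdef
  have hδ0 : 0 < δ := lt_min hε0 (by linarith)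
  have hδε : δ ≤ ε := min_le_left _ _
  have hδTa : δ ≤ T - a := min_le_right _ _
  -- two sample points below T
  have key : c T = Real.cos (T - a) • p + Real.sin (T - a) • q ∧
      w = (-Real.sin (T - a)) • p + Real.cos (T - a) • q := by
    have hs₁ : T - δ / 2 ∈ Set.Icc a b := ⟨by linarith, by linarith⟩
    have hs₂ : T - δ / 4 ∈ Set.Icc a b := ⟨by linarith, by linarith⟩
    have hs₁ε : |T - δ / 2 - T| < ε := by rw [abs_lt]; constructor <;> linarith
    have hs₂ε : |T - δ / 4 - T| < ε := by rw [abs_lt]; constructor <;> linarith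
    have e₁ := hwf _ hs₁ hs₁ε
    have e₂ := hwf _ hs₂ hs₂ε
    have f₁ := hbelow (T - δ / 2) (by linarith) (by linarith)
    have f₂ := hbelow (T - δ / 4) (by linarith) (by linarith)
    have g₁ : Real.cos (T - δ / 2 - T) • c T + Real.sin (T - δ / 2 - T) • w =
        Real.cos (T - δ / 2 - T) • (Real.cos (T - a) • p + Real.sin (T - a) • q) +
          Real.sin (T - δ / 2 - T) • ((-Real.sin (T - a)) • p + Real.cos (T - a) • q) := by
      rw [← gc_fdecomp, ← e₁, f₁, show T - δ / 2 - T + (T - a) = T - δ / 2 - a by ring]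
    have g₂ : Real.cos (T - δ / 4 - T) • c T + Real.sin (T - δ / 4 - T) • w =
        Real.cos (T - δ / 4 - T) • (Real.cos (T - a) • p + Real.sin (T - a) • q) +
          Real.sin (T - δ / 4 - T) • ((-Real.sin (T - a)) • p + Real.cos (T - a) • q) := by
      rw [← gc_fdecomp, ← e₂, f₂, show T - δ / 4 - T + (T - a) = T - δ / 4 - a by ring]
    have hsin : Real.sin ((T - δ / 4 - T) - (T - δ / 2 - T)) ≠ 0 := by
      rw [show (T - δ / 4 - T) - (T - δ / 2 - T) = δ / 4 by ring]
      exact ne_of_gt (Real.sin_pos_of_pos_of_lt_pi (by linarith) (by linarith))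
    exact gc_solve2 hsin g₁ g₂
  obtain ⟨hcT, hwT⟩ := key
  -- formula extends past T throughout the window
  have H : ∀ s ∈ Set.Icc a (min b (T + ε / 2)),
      c s = Real.cos (s - a) • p + Real.sin (s - a) • q := by
    intro s hs
    rcases lt_or_ge s T with h | h
    · exact hbelow s hs.1 h
    · have hsb : s ≤ b := le_trans hs.2 (min_le_left _ _)
      have hsε : |s - T| < ε := by
        have h1 : s ≤ T + ε / 2 := le_trans hs.2 (min_le_right _ _)
        rw [abs_lt]; constructor <;> linarith
      have := hwf s ⟨hs.1, hsb⟩ hsε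
      rw [this, hcT, hwT, ← gc_fdecomp, show s - T + (T - a) = s - a by ring]
  -- conclude T = b
  have hT'A : min b (T + ε / 2) ∈ A := by
    refine ⟨⟨le_min (le_of_lt hab) (by linarith), min_le_left _ _⟩, H⟩
  have hT'le : min b (T + ε / 2) ≤ T := le_csSup hAbdd hT'A
  have hbT : b ≤ T := by
    by_contra hc
    push_neg at hc
    have : T < min b (T + ε / 2) := lt_min hc (by linarith)
    linarith
  intro t htab
  exact H t ⟨htab.1, le_min htab.2 (by linarith [htab.2])⟩
end

section
/- Let E be a real inner product space with dim E ≥ 2, let S be its unit sphere with the angular distance d_S(x,y) = arccos⟨x,y⟩, and let L > 0. Suppose c : [0,L] → S is a map such that every t ∈ [0,L] has ε > 0 with d_S(c(s), c(s')) = |s − s'| for all s, s' ∈ [0,L] ∩ (t−ε, t+ε), and suppose c(0) = c(L). Then L is a positive integer multiple of 2π, and the image of c is a great circle. -/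
open RealInnerProductSpace Real

section Aux
variable {E : Type*} [NormedAddCommGroup E] [InnerProductSpace ℝ E]

lemma my_unit_eq_of_inner_one {x y : E} (hx : ‖x‖ = 1) (hy : ‖y‖ = 1)
    (h : ⟪x, y⟫ = 1) : x = y := by
  have h2 : ‖x - y‖ ^ 2 = 0 := by
    rw [norm_sub_pow_two_real, hx, hy, h]; ring
  have h3 : ‖x - y‖ = 0 := by nlinarith [norm_nonneg (x - y)]
  exact sub_eq_zero.mp (norm_eq_zero.mp h3)

lemma my_u_props {x y : E} (hx : ‖x‖ = 1) (hy : ‖y‖ = 1) {d : ℝ} (hd : Real.sin d ≠ 0)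
    (hxy : ⟪x, y⟫ = Real.cos d) :
    ⟪x, (Real.sin d)⁻¹ • (y - Real.cos d • x)⟫ = 0 ∧
      ‖(Real.sin d)⁻¹ • (y - Real.cos d • x)‖ = 1 := by
  have hxx : ⟪x, x⟫ = 1 := by rw [real_inner_self_eq_norm_sq, hx]; norm_num
  have h1 : ⟪x, (Real.sin d)⁻¹ • (y - Real.cos d • x)⟫ = 0 := by
    rw [real_inner_smul_right, inner_sub_right, real_inner_smul_right, hxy, hxx]
    ring
  refine ⟨h1, ?_⟩
  have hyy : ⟪y, y⟫ = 1 := by rw [real_inner_self_eq_norm_sq, hy]; norm_num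
  have hyx : ⟪y, x⟫ = Real.cos d := by rw [real_inner_comm]; exact hxy
  have h2 : ‖(Real.sin d)⁻¹ • (y - Real.cos d • x)‖ ^ 2 = 1 := by
    rw [← real_inner_self_eq_norm_sq]
    simp only [real_inner_smul_left, real_inner_smul_right, inner_sub_left, inner_sub_right,
      hxx, hxy, hyx, hyy]
    have := Real.sin_sq_add_cos_sq d
    field_simp
    nlinarith [this]
  nlinarith [norm_nonneg ((Real.sin d)⁻¹ • (y - Real.cos d • x))]

lemma my_geodesic_point {x y z : E} (hx : ‖x‖ = 1) (hy : ‖y‖ = 1) (hz : ‖z‖ = 1)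
    {d r : ℝ} (hd : Real.sin d ≠ 0)
    (hxy : ⟪x, y⟫ = Real.cos d)
    (hzx : ⟪z, x⟫ = Real.cos r)
    (hzy : ⟪z, y⟫ = Real.cos (r - d)) :
    z = Real.cos r • x + Real.sin r • ((Real.sin d)⁻¹ • (y - Real.cos d • x)) := by
  set u : E := (Real.sin d)⁻¹ • (y - Real.cos d • x) with hu
  obtain ⟨hxu, hnu⟩ := my_u_props hx hy hd hxy
  have hxx : ⟪x, x⟫ = 1 := by rw [real_inner_self_eq_norm_sq, hx]; norm_num
  have huu : ⟪u, u⟫ = 1 := by rw [real_inner_self_eq_norm_sq, hnu]; norm_num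
  have hzu : ⟪z, u⟫ = Real.sin r := by
    rw [hu, real_inner_smul_right, inner_sub_right, real_inner_smul_right, hzy, hzx,
      Real.cos_sub]
    field_simp
    ring
  set v : E := Real.cos r • x + Real.sin r • u with hv
  have hzv : ⟪z, v⟫ = 1 := by
    rw [hv, inner_add_right, real_inner_smul_right, real_inner_smul_right, hzx, hzu]
    nlinarith [Real.sin_sq_add_cos_sq r]
  have hux : ⟪u, x⟫ = 0 := by rw [real_inner_comm]; exact hxu
  have hnv : ‖v‖ = 1 := by
    have hxu' : ⟪x, u⟫ = 0 := hxu
    have h2 : ‖v‖ ^ 2 = 1 := by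
      rw [← real_inner_self_eq_norm_sq, hv]
      simp only [inner_add_left, inner_add_right, real_inner_smul_left, real_inner_smul_right,
        hxx, huu, hxu', hux]
      nlinarith [Real.sin_sq_add_cos_sq r]
    nlinarith [norm_nonneg v]
  exact my_unit_eq_of_inner_one hz hnv hzv

end Aux

section Aux2
variable {E : Type*} [NormedAddCommGroup E] [InnerProductSpace ℝ E]

lemma my_unique {P Q P' Q' : E} {a b : ℝ} (h : Real.sin (b - a) ≠ 0)
    (ha : Real.cos a • P + Real.sin a • Q = Real.cos a • P' + Real.sin a • Q')
    (hb : Real.cos b • P + Real.sin b • Q = Real.cos b • P' + Real.sin b • Q') :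
    P = P' ∧ Q = Q' := by
  have h1 : Real.cos a • (P - P') + Real.sin a • (Q - Q') = 0 := by
    rw [← sub_eq_zero] at ha; rw [← ha]; module
  have h2 : Real.cos b • (P - P') + Real.sin b • (Q - Q') = 0 := by
    rw [← sub_eq_zero] at hb; rw [← hb]; module
  have hX : (Real.sin b * Real.cos a - Real.cos b * Real.sin a) • (P - P') = 0 := by
    calc (Real.sin b * Real.cos a - Real.cos b * Real.sin a) • (P - P')
        = Real.sin b • (Real.cos a • (P - P') + Real.sin a • (Q - Q'))
          - Real.sin a • (Real.cos b • (P - P') + Real.sin b • (Q - Q')) := by module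
      _ = 0 := by rw [h1, h2]; simp
  have hY : (Real.sin b * Real.cos a - Real.cos b * Real.sin a) • (Q - Q') = 0 := by
    calc (Real.sin b * Real.cos a - Real.cos b * Real.sin a) • (Q - Q')
        = Real.cos a • (Real.cos b • (P - P') + Real.sin b • (Q - Q'))
          - Real.cos b • (Real.cos a • (P - P') + Real.sin a • (Q - Q')) := by module
      _ = 0 := by rw [h1, h2]; simp
  have hc : Real.sin b * Real.cos a - Real.cos b * Real.sin a ≠ 0 := by
    rw [← Real.sin_sub]; exact h
  constructor
  · have := (smul_eq_zero.mp hX).resolve_left hc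
    exact sub_eq_zero.mp this
  · have := (smul_eq_zero.mp hY).resolve_left hc
    exact sub_eq_zero.mp this


lemma my_frame {x u : E} (hxx : ⟪x, x⟫ = 1) (huu : ⟪u, u⟫ = 1) (hxu : ⟪x, u⟫ = 0) (a : ℝ) :
    ‖Real.cos a • x - Real.sin a • u‖ = 1 ∧ ‖Real.sin a • x + Real.cos a • u‖ = 1 ∧
      ⟪Real.cos a • x - Real.sin a • u, Real.sin a • x + Real.cos a • u⟫ = 0 := by
  have hux : ⟪u, x⟫ = 0 := by rw [real_inner_comm]; exact hxu
  refine ⟨?_, ?_, ?_⟩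
  · have h2 : ‖Real.cos a • x - Real.sin a • u‖ ^ 2 = 1 := by
      rw [← real_inner_self_eq_norm_sq]
      simp only [inner_sub_left, inner_sub_right, real_inner_smul_left, real_inner_smul_right,
        hxx, huu, hxu, hux]
      nlinarith [Real.sin_sq_add_cos_sq a]
    nlinarith [norm_nonneg (Real.cos a • x - Real.sin a • u)]
  · have h2 : ‖Real.sin a • x + Real.cos a • u‖ ^ 2 = 1 := by
      rw [← real_inner_self_eq_norm_sq]
      simp only [inner_add_left, inner_add_right, real_inner_smul_left, real_inner_smul_right,
        hxx, huu, hxu, hux]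
      nlinarith [Real.sin_sq_add_cos_sq a]
    nlinarith [norm_nonneg (Real.sin a • x + Real.cos a • u)]
  · simp only [inner_sub_left, inner_add_right, real_inner_smul_left, real_inner_smul_right,
      hxx, huu, hxu, hux]
    ring

lemma my_chart {L : ℝ} (hL : 0 < L) {c : ℝ → E}
    (hcS : ∀ t ∈ Set.Icc 0 L, ‖c t‖ = 1) {t : ℝ} (ht : t ∈ Set.Icc 0 L)
    {ε : ℝ} (hε : 0 < ε)
    (hgeo : ∀ s ∈ Set.Icc 0 L, ∀ s' ∈ Set.Icc 0 L,
      |s - t| < ε → |s' - t| < ε → Real.arccos ⟪c s, c s'⟫ = |s - s'|) :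
    ∃ ε' > 0, ∃ P Q : E, ‖P‖ = 1 ∧ ‖Q‖ = 1 ∧ ⟪P, Q⟫ = 0 ∧
      ∀ s ∈ Set.Icc 0 L, |s - t| < ε' → c s = Real.cos s • P + Real.sin s • Q := by
  set ε' := min ε 1 with hε'def
  have hε'pos : 0 < ε' := lt_min hε one_pos
  have hε'le : ε' ≤ 1 := min_le_right _ _
  have hinn : ∀ s ∈ Set.Icc 0 L, ∀ s' ∈ Set.Icc 0 L, |s - t| < ε' → |s' - t| < ε' →
      ⟪c s, c s'⟫ = Real.cos (s - s') := by
    intro s hs s' hs' h1 h2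
    have h3 := hgeo s hs s' hs' (lt_of_lt_of_le h1 (min_le_left _ _))
      (lt_of_lt_of_le h2 (min_le_left _ _))
    have hb := abs_real_inner_le_norm (c s) (c s')
    rw [hcS s hs, hcS s' hs', one_mul] at hb
    obtain ⟨hb1, hb2⟩ := abs_le.mp hb
    have h4 : ⟪c s, c s'⟫ = Real.cos |s - s'| := by
      rw [← h3, Real.cos_arccos hb1 hb2]
    rw [h4, Real.cos_abs]
  set a := max 0 (t - ε' / 3) with hadef
  set b := min L (t + ε' / 3) with hbdef
  have ha1 : t - ε' / 3 ≤ a := le_max_right _ _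
  have ha2 : a ≤ t := max_le ht.1 (by linarith)
  have hb1 : b ≤ t + ε' / 3 := min_le_right _ _
  have hb2 : t ≤ b := le_min ht.2 (by linarith)
  have ha_mem : a ∈ Set.Icc 0 L := ⟨le_max_left _ _, le_trans ha2 ht.2⟩
  have hb_mem : b ∈ Set.Icc 0 L := ⟨le_trans ht.1 hb2, min_le_left _ _⟩
  have hat : |a - t| < ε' := by rw [abs_lt]; constructor <;> linarith
  have hbt : |b - t| < ε' := by rw [abs_lt]; constructor <;> linarith
  have hab : 0 < b - a := by
    rcases le_or_gt (t - ε' / 3) 0 with h | h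
    · have haz : a = 0 := max_eq_left h
      have : 0 < b := lt_min hL (by linarith [ht.1])
      linarith
    · have haz : a = t - ε' / 3 := max_eq_right h.le
      linarith
  have hab2 : b - a < π := by linarith [Real.pi_gt_three]
  have hsd : Real.sin (b - a) ≠ 0 := ne_of_gt (Real.sin_pos_of_pos_of_lt_pi hab hab2)
  have hxy : ⟪c a, c b⟫ = Real.cos (b - a) := by
    rw [hinn a ha_mem b hb_mem hat hbt, show a - b = -(b - a) by ring, Real.cos_neg]
  set u : E := (Real.sin (b - a))⁻¹ • (c b - Real.cos (b - a) • c a) with hu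
  obtain ⟨hxu, hnu⟩ := my_u_props (hcS a ha_mem) (hcS b hb_mem) hsd hxy
  have hxu' : ⟪c a, u⟫ = 0 := hxu
  have hxx : ⟪c a, c a⟫ = 1 := by rw [real_inner_self_eq_norm_sq, hcS a ha_mem]; norm_num
  have huu : ⟪u, u⟫ = 1 := by rw [real_inner_self_eq_norm_sq, hnu]; norm_num
  have hux : ⟪u, c a⟫ = 0 := by rw [real_inner_comm]; exact hxu'
  obtain ⟨hP, hQ, hPQ⟩ := my_frame hxx huu hxu' a
  refine ⟨ε', hε'pos, Real.cos a • c a - Real.sin a • u, Real.sin a • c a + Real.cos a • u,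
    hP, hQ, hPQ, ?_⟩
  · intro s hs hst
    have hzx : ⟪c s, c a⟫ = Real.cos (s - a) := hinn s hs a ha_mem hst hat
    have hzy : ⟪c s, c b⟫ = Real.cos ((s - a) - (b - a)) := by
      rw [hinn s hs b hb_mem hst hbt]; ring_nf
    have hgp := my_geodesic_point (hcS a ha_mem) (hcS b hb_mem) (hcS s hs) hsd hxy hzx hzy
    rw [hgp, Real.cos_sub, Real.sin_sub]
    module

end Aux2



/-- A closed locally unit-speed, locally distance-preserving curve `c : [0,L] → S` in the
unit sphere (angular distance `d_S(x,y) = arccos ⟪x,y⟫`) of a real inner product space of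
dimension at least 2, with `c 0 = c L`, has length `L` a positive integer multiple of `2π`
and its image is a great circle. -/
theorem closed_local_isometry_into_sphere
    {E : Type*} [NormedAddCommGroup E] [InnerProductSpace ℝ E]
    (hdim : 2 ≤ Module.rank ℝ E)
    (L : ℝ) (hL : 0 < L) (c : ℝ → E)
    (hcS : ∀ t ∈ Set.Icc 0 L, ‖c t‖ = 1)
    (hloc : ∀ t ∈ Set.Icc 0 L, ∃ ε > 0, ∀ s ∈ Set.Icc 0 L, ∀ s' ∈ Set.Icc 0 L,
      |s - t| < ε → |s' - t| < ε → Real.arccos ⟪c s, c s'⟫ = |s - s'|)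
    (hclosed : c 0 = c L) :
    (∃ n : ℕ, 0 < n ∧ L = 2 * π * n) ∧
    ∃ p q : E, ‖p‖ = 1 ∧ ‖q‖ = 1 ∧ ⟪p, q⟫ = 0 ∧
      c '' Set.Icc 0 L = Set.range (fun t : ℝ => Real.cos t • p + Real.sin t • q) := by
  have chart : ∀ t ∈ Set.Icc 0 L, ∃ ε > 0, ∃ P Q : E, ‖P‖ = 1 ∧ ‖Q‖ = 1 ∧ ⟪P, Q⟫ = 0 ∧
      ∀ s ∈ Set.Icc 0 L, |s - t| < ε → c s = Real.cos s • P + Real.sin s • Q := by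
    intro t ht
    obtain ⟨ε, hε, hgeo⟩ := hloc t ht
    exact my_chart hL hcS ht hε hgeo
  have h0L : (0:ℝ) ∈ Set.Icc 0 L := ⟨le_refl 0, hL.le⟩
  obtain ⟨ε₀, hε₀, P, Q, hP, hQ, hPQ, h0⟩ := chart 0 h0L
  set A : Set ℝ :=
    {t | t ∈ Set.Icc 0 L ∧ ∀ s ∈ Set.Icc 0 t, c s = Real.cos s • P + Real.sin s • Q} with hA
  have ht0pos : 0 < min L (ε₀ / 2) := lt_min hL (by linarith)
  have ht0A : min L (ε₀ / 2) ∈ A := by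
    refine ⟨⟨ht0pos.le, min_le_left _ _⟩, ?_⟩
    intro s hs
    apply h0 s ⟨hs.1, le_trans hs.2 (min_le_left _ _)⟩
    rw [sub_zero, abs_of_nonneg hs.1]
    exact lt_of_le_of_lt (le_trans hs.2 (min_le_right _ _)) (by linarith)
  have hAne : A.Nonempty := ⟨_, ht0A⟩
  have hAbdd : BddAbove A := ⟨L, fun x hx => hx.1.2⟩
  set T := sSup A with hT
  have hTt0 : min L (ε₀ / 2) ≤ T := le_csSup hAbdd ht0A
  have hTpos : 0 < T := lt_of_lt_of_le ht0pos hTt0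
  have hTL : T ≤ L := csSup_le hAne (fun x hx => hx.1.2)
  have hbelow : ∀ s, 0 ≤ s → s < T → c s = Real.cos s • P + Real.sin s • Q := by
    intro s hs0 hsT
    obtain ⟨a, haA, hsa⟩ := exists_lt_of_lt_csSup hAne hsT
    exact haA.2 s ⟨hs0, hsa.le⟩
  obtain ⟨ε, hε, P', Q', hP', hQ', hPQ', hTc⟩ := chart T ⟨hTpos.le, hTL⟩
  have hδpos : 0 < min (ε / 2) (min (T / 2) 1) := lt_min (by linarith) (lt_min (by linarith) one_pos)
  set δ := min (ε / 2) (min (T / 2) 1) with hδ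
  have hδε : δ ≤ ε / 2 := min_le_left _ _
  have hδT : δ ≤ T / 2 := le_trans (min_le_right _ _) (min_le_left _ _)
  have hδ1 : δ ≤ 1 := le_trans (min_le_right _ _) (min_le_right _ _)
  have haI : T - δ ∈ Set.Icc 0 L := ⟨by linarith, by linarith⟩
  have hbI : T - δ / 2 ∈ Set.Icc 0 L := ⟨by linarith, by linarith⟩
  have hfa : Real.cos (T - δ) • P + Real.sin (T - δ) • Q
      = Real.cos (T - δ) • P' + Real.sin (T - δ) • Q' := by
    rw [← hbelow (T - δ) (by linarith) (by linarith),
      hTc (T - δ) haI (by rw [abs_lt]; constructor <;> linarith)]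
  have hfb : Real.cos (T - δ / 2) • P + Real.sin (T - δ / 2) • Q
      = Real.cos (T - δ / 2) • P' + Real.sin (T - δ / 2) • Q' := by
    rw [← hbelow (T - δ / 2) (by linarith) (by linarith),
      hTc (T - δ / 2) hbI (by rw [abs_lt]; constructor <;> linarith)]
  have hsab : Real.sin ((T - δ / 2) - (T - δ)) ≠ 0 := by
    have he : (T - δ / 2) - (T - δ) = δ / 2 := by ring
    rw [he]
    exact ne_of_gt (Real.sin_pos_of_pos_of_lt_pi (by linarith) (by linarith [Real.pi_gt_three]))
  obtain ⟨hPP, hQQ⟩ := my_unique hsab hfa hfb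
  have hmemA : min L (T + ε / 2) ∈ A := by
    refine ⟨⟨le_min (by linarith) (by linarith), min_le_left _ _⟩, ?_⟩
    intro s hs
    rcases lt_or_ge s T with h | h
    · exact hbelow s hs.1 h
    · have hsL : s ≤ L := le_trans hs.2 (min_le_left _ _)
      have hsTε : s ≤ T + ε / 2 := le_trans hs.2 (min_le_right _ _)
      have hcs := hTc s ⟨hs.1, hsL⟩ (by rw [abs_lt]; constructor <;> linarith)
      rw [hcs, hPP, hQQ]
  have hle : min L (T + ε / 2) ≤ T := le_csSup hAbdd hmemA
  have hTeqL : T = L := by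
    by_contra hne
    have h1 : T < L := lt_of_le_of_ne hTL hne
    have := lt_min h1 (by linarith : T < T + ε / 2)
    linarith
  have hLA : L ∈ A := by
    have he : min L (T + ε / 2) = L := by rw [hTeqL]; exact min_eq_left (by linarith)
    rwa [he] at hmemA
  have hall : ∀ s ∈ Set.Icc 0 L, c s = Real.cos s • P + Real.sin s • Q := hLA.2
  have hc0 : c 0 = P := by rw [hall 0 h0L]; simp
  have hcL : c L = Real.cos L • P + Real.sin L • Q := hall L ⟨hL.le, le_refl L⟩
  have hkey : P = Real.cos L • P + Real.sin L • Q := by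
    have h2 := hclosed
    rw [hc0, hcL] at h2
    exact h2
  have hPP1 : ⟪P, P⟫ = 1 := by rw [real_inner_self_eq_norm_sq, hP]; norm_num
  have hcosL : Real.cos L = 1 := by
    have h2 := congrArg (fun w => ⟪P, w⟫) hkey
    simp only [inner_add_right, real_inner_smul_right, hPP1, hPQ] at h2
    linarith
  obtain ⟨n, hn⟩ := (Real.cos_eq_one_iff L).mp hcosL
  have hnpos : 0 < n := by
    by_contra h
    push_neg at h
    have hn0 : (n:ℝ) ≤ 0 := by exact_mod_cast h
    nlinarith [Real.pi_pos]
  have hcast : ((n.toNat : ℕ) : ℝ) = (n : ℝ) := by exact_mod_cast Int.toNat_of_nonneg hnpos.le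
  refine ⟨⟨n.toNat, by omega, by rw [← hn, hcast]; ring⟩, P, Q, hP, hQ, hPQ, ?_⟩
  apply Set.Subset.antisymm
  · rintro y ⟨s, hs, rfl⟩
    exact ⟨s, (hall s hs).symm⟩
  · rintro y ⟨t, rfl⟩
    have h2π : (0:ℝ) < 2 * π := by linarith [Real.pi_pos]
    have hs0 : 0 ≤ t - (⌊t / (2*π)⌋ : ℝ) * (2*π) := Int.sub_floor_div_mul_nonneg t h2π
    have hs2 : t - (⌊t / (2*π)⌋ : ℝ) * (2*π) < 2*π := Int.sub_floor_div_mul_lt t h2π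
    have hsL : t - (⌊t / (2*π)⌋ : ℝ) * (2*π) ≤ L := by
      have h1 : (1:ℝ) ≤ (n:ℝ) := by exact_mod_cast hnpos
      nlinarith [Real.pi_pos]
    refine ⟨t - (⌊t / (2*π)⌋ : ℝ) * (2*π), ⟨hs0, hsL⟩, ?_⟩
    rw [hall _ ⟨hs0, hsL⟩, Real.cos_periodic.sub_int_mul_eq, Real.sin_periodic.sub_int_mul_eq]
end

section
/- Assume the standing hypotheses (★). Let u ∈ E be nonzero, let N be a path component of Ψ⁻¹(H_u), and let x₁, x₂ ∈ N. If Ψ(x₁) = Ψ(x₂) then x₁ = x₂. If Ψ(x₁) ≠ Ψ(x₂), then, setting d = d_S(Ψ(x₁), Ψ(x₂)), there exists a path γ : [0,d] → X with γ(0) = x₁, γ(d) = x₂, dist(γ(s), γ(t)) = |s − t| for all s, t ∈ [0,d], and ⟨Ψ(γ(t)), u⟩ > 0 for all t ∈ [0,d]. -/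
open RealInnerProductSpace

/-- Standing hypotheses (★): `E` is a finite-dimensional real inner product space of
dimension at least 3 with unit sphere `S = {f | ‖f‖ = 1}` carrying the angular distance
`d_S(x,y) = arccos ⟪x,y⟫`; `X` is a compact, path-connected, locally path-connected metric
space and `Ψ : X → E` is a continuous map into `S` such that:
(i) for every nonzero `u` and every path component `N` of `Ψ⁻¹(H_u)`
(where `H_u = {f | ⟪f,u⟫ > 0}`), `Ψ` restricted to `N` is injective and
`dist a b = d_S (Ψ a) (Ψ b)` on `N`;
(ii) for every such `N` there is a convex cone `C_N` with `Ψ(N) = S ∩ C_N ∩ H_u`, and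
`Ψ(N)` has nonempty interior in `S`;
(iii) any two points of `X` are joined by a minimizing geodesic. -/
structure StarHyp (E : Type*) [NormedAddCommGroup E] [InnerProductSpace ℝ E]
    (X : Type*) [MetricSpace X] (Ψ : X → E) : Prop where
  finiteDim : FiniteDimensional ℝ E
  dim : 3 ≤ Module.finrank ℝ E
  compact : CompactSpace X
  pathConn : PathConnectedSpace X
  locPathConn : LocPathConnectedSpace X
  unit : ∀ x, ‖Ψ x‖ = 1
  cont : Continuous Ψ
  isometric : ∀ u : E, u ≠ 0 → ∀ x₀ : X, 0 < ⟪Ψ x₀, u⟫ →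
    ∀ a ∈ pathComponentIn (Ψ ⁻¹' {f : E | 0 < ⟪f, u⟫}) x₀,
      ∀ b ∈ pathComponentIn (Ψ ⁻¹' {f : E | 0 < ⟪f, u⟫}) x₀,
        (Ψ a = Ψ b → a = b) ∧ dist a b = Real.arccos ⟪Ψ a, Ψ b⟫
  image_convex : ∀ u : E, u ≠ 0 → ∀ x₀ : X, 0 < ⟪Ψ x₀, u⟫ →
    ∃ C : Set E, (∀ a ∈ C, ∀ b ∈ C, a + b ∈ C) ∧
      (∀ t : ℝ, 0 < t → ∀ a ∈ C, t • a ∈ C) ∧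
      Ψ '' pathComponentIn (Ψ ⁻¹' {f : E | 0 < ⟪f, u⟫}) x₀ =
        {f : E | ‖f‖ = 1} ∩ C ∩ {f : E | 0 < ⟪f, u⟫}
  image_interior : ∀ u : E, u ≠ 0 → ∀ x₀ : X, 0 < ⟪Ψ x₀, u⟫ →
    ∃ f₀ ∈ Ψ '' pathComponentIn (Ψ ⁻¹' {f : E | 0 < ⟪f, u⟫}) x₀, ∃ ε > 0,
      ∀ g : E, ‖g‖ = 1 → ‖g - f₀‖ < ε →
        g ∈ Ψ '' pathComponentIn (Ψ ⁻¹' {f : E | 0 < ⟪f, u⟫}) x₀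
  geodesicSpace : ∀ x y : X, ∃ γ : ℝ → X, γ 0 = x ∧ γ (dist x y) = y ∧
    ∀ s ∈ Set.Icc 0 (dist x y), ∀ t ∈ Set.Icc 0 (dist x y), dist (γ s) (γ t) = |s - t|

/-- Under the standing hypotheses (★): if `x₁, x₂` lie in the same path component `N` of
`Ψ⁻¹(H_u)` then `Ψ x₁ = Ψ x₂` implies `x₁ = x₂`; and if `Ψ x₁ ≠ Ψ x₂` there is a
minimizing geodesic `γ : [0, d_S(Ψ x₁, Ψ x₂)] → X` from `x₁` to `x₂` whose image under `Ψ`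
stays in the open half-space `H_u`. -/
theorem starHyp_component_injective_and_geodesic
    {E : Type*} [NormedAddCommGroup E] [InnerProductSpace ℝ E]
    {X : Type*} [MetricSpace X] (Ψ : X → E) (h : StarHyp E X Ψ)
    (u : E) (hu : u ≠ 0) (x₁ x₂ : X) (hx₁ : 0 < ⟪Ψ x₁, u⟫)
    (hx₂ : x₂ ∈ pathComponentIn (Ψ ⁻¹' {f : E | 0 < ⟪f, u⟫}) x₁) :
    (Ψ x₁ = Ψ x₂ → x₁ = x₂) ∧
    (Ψ x₁ ≠ Ψ x₂ → ∃ γ : ℝ → X,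
      γ 0 = x₁ ∧ γ (Real.arccos ⟪Ψ x₁, Ψ x₂⟫) = x₂ ∧
      (∀ s ∈ Set.Icc 0 (Real.arccos ⟪Ψ x₁, Ψ x₂⟫),
        ∀ t ∈ Set.Icc 0 (Real.arccos ⟪Ψ x₁, Ψ x₂⟫), dist (γ s) (γ t) = |s - t|) ∧
      (∀ t ∈ Set.Icc 0 (Real.arccos ⟪Ψ x₁, Ψ x₂⟫), 0 < ⟪Ψ (γ t), u⟫)) := by

  classical
  have hx₁mem : x₁ ∈ pathComponentIn (Ψ ⁻¹' {f : E | 0 < ⟪f, u⟫}) x₁ :=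
    mem_pathComponentIn_self hx₁
  have hx₂u : 0 < ⟪Ψ x₂, u⟫ := by
    have h' : x₂ ∈ Ψ ⁻¹' {f : E | 0 < ⟪f, u⟫} := pathComponentIn_subset hx₂
    exact h'
  refine ⟨fun he => (h.isometric u hu x₁ hx₁ x₁ hx₁mem x₂ hx₂).1 he, fun hne => ?_⟩
  set N := pathComponentIn (Ψ ⁻¹' {f : E | 0 < ⟪f, u⟫}) x₁ with hN
  set c : ℝ := ⟪Ψ x₁, Ψ x₂⟫ with hc
  set d : ℝ := Real.arccos c with hd
  have h1 : ‖Ψ x₁‖ = 1 := h.unit x₁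
  have h2 : ‖Ψ x₂‖ = 1 := h.unit x₂
  have hc1 : c < 1 := by
    have hle : c ≤ 1 := by
      have := real_inner_le_norm (Ψ x₁) (Ψ x₂)
      rw [h1, h2, mul_one] at this; exact this
    exact lt_of_le_of_ne hle
      (fun he => hne ((inner_eq_one_iff_of_norm_eq_one h1 h2).1 he))
  have hcm1 : -1 < c := by
    have hsum : Ψ x₁ + Ψ x₂ ≠ 0 := by
      intro hz
      have : (0:ℝ) < ⟪Ψ x₁ + Ψ x₂, u⟫ := by
        rw [inner_add_left]; linarith
      rw [hz, inner_zero_left] at this; exact lt_irrefl _ this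
    have hnormpos : 0 < ‖Ψ x₁ + Ψ x₂‖ ^ 2 := pow_pos (norm_pos_iff.mpr hsum) 2
    have := norm_add_sq_real (Ψ x₁) (Ψ x₂)
    rw [h1, h2] at this
    nlinarith
  have hd0 : 0 < d := Real.arccos_pos.2 hc1
  have hdpi : d < Real.pi := by
    rw [hd, Real.arccos]
    have := Real.neg_pi_div_two_lt_arcsin.2 hcm1
    linarith
  have hsd : 0 < Real.sin d := Real.sin_pos_of_pos_of_lt_pi hd0 hdpi
  have hcd : Real.cos d = c := Real.cos_arccos (by linarith) (by linarith)
  set σ : ℝ → E := fun t =>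
    (Real.sin d)⁻¹ • (Real.sin (d - t) • Ψ x₁ + Real.sin t • Ψ x₂) with hσ
  have hi11 : ⟪Ψ x₁, Ψ x₁⟫ = 1 := by
    rw [real_inner_self_eq_norm_mul_norm, h1]; norm_num
  have hi22 : ⟪Ψ x₂, Ψ x₂⟫ = 1 := by
    rw [real_inner_self_eq_norm_mul_norm, h2]; norm_num
  have hi21 : ⟪Ψ x₂, Ψ x₁⟫ = c := by rw [real_inner_comm]
  have hinner : ∀ s t : ℝ, ⟪σ s, σ t⟫ = Real.cos (s - t) := by
    intro s t
    simp only [hσ, real_inner_smul_left, real_inner_smul_right, inner_add_left,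
      inner_add_right, hi11, hi22, hi21, ← hc]
    rw [Real.sin_sub d s, Real.sin_sub d t, Real.cos_sub s t]
    have hsd' : Real.sin d ≠ 0 := hsd.ne'
    rw [← hcd]
    field_simp
    linear_combination (-(Real.sin s * Real.sin t)) * Real.sin_sq_add_cos_sq d
  have hnorm1 : ∀ t : ℝ, ‖σ t‖ = 1 := by
    intro t
    have h0 := hinner t t
    rw [sub_self, Real.cos_zero, real_inner_self_eq_norm_mul_norm] at h0
    nlinarith [norm_nonneg (σ t)]
  have hσ0 : σ 0 = Ψ x₁ := by
    simp only [hσ, sub_zero, Real.sin_zero, zero_smul, add_zero, smul_smul,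
      inv_mul_cancel₀ hsd.ne', one_smul]
  have hσd : σ d = Ψ x₂ := by
    simp only [hσ, sub_self, Real.sin_zero, zero_smul, zero_add, smul_smul,
      inv_mul_cancel₀ hsd.ne', one_smul]
  obtain ⟨C, haddC, hsmulC, himg⟩ := h.image_convex u hu x₁ hx₁
  have hf₁img : Ψ x₁ ∈ Ψ '' N := ⟨x₁, hx₁mem, rfl⟩
  have hf₂img : Ψ x₂ ∈ Ψ '' N := ⟨x₂, hx₂, rfl⟩
  have hC₁ : Ψ x₁ ∈ C := by rw [himg] at hf₁img; exact hf₁img.1.2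
  have hC₂ : Ψ x₂ ∈ C := by rw [himg] at hf₂img; exact hf₂img.1.2
  have hsin_nonneg : ∀ t ∈ Set.Icc (0:ℝ) d, 0 ≤ Real.sin t := by
    intro t ht
    exact Real.sin_nonneg_of_nonneg_of_le_pi ht.1 (ht.2.trans hdpi.le)
  have hHu : ∀ t ∈ Set.Icc (0:ℝ) d, 0 < ⟪σ t, u⟫ := by
    intro t ht
    simp only [hσ, real_inner_smul_left, inner_add_left]
    apply mul_pos (inv_pos.2 hsd)
    rcases lt_or_eq_of_le ht.2 with htd | htd
    · have hsdt : 0 < Real.sin (d - t) :=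
        Real.sin_pos_of_pos_of_lt_pi (by linarith) (by linarith [ht.1])
      have h2' : 0 ≤ Real.sin t * ⟪Ψ x₂, u⟫ :=
        mul_nonneg (hsin_nonneg t ht) hx₂u.le
      nlinarith
    · rw [htd, sub_self, Real.sin_zero, zero_mul, zero_add]
      exact mul_pos hsd hx₂u
  have hmem : ∀ t ∈ Set.Icc (0:ℝ) d, σ t ∈ Ψ '' N := by
    intro t ht
    rw [himg]
    refine ⟨⟨hnorm1 t, ?_⟩, hHu t ht⟩
    rcases eq_or_lt_of_le ht.1 with h0 | h0
    · rw [← h0, hσ0]; exact hC₁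
    · rcases eq_or_lt_of_le ht.2 with htd | htd
      · rw [htd, hσd]; exact hC₂
      · have hst : 0 < Real.sin t := Real.sin_pos_of_pos_of_lt_pi h0 (by linarith)
        have hsdt : 0 < Real.sin (d - t) :=
          Real.sin_pos_of_pos_of_lt_pi (by linarith) (by linarith)
        exact hsmulC _ (inv_pos.2 hsd) _
          (haddC _ (hsmulC _ hsdt _ hC₁) _ (hsmulC _ hst _ hC₂))
  set γ : ℝ → X := fun t => if hm : σ t ∈ Ψ '' N then hm.choose else x₁ with hγ
  have hγmem : ∀ t ∈ Set.Icc (0:ℝ) d, γ t ∈ N ∧ Ψ (γ t) = σ t := by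
    intro t ht
    have hm := hmem t ht
    simp only [hγ, dif_pos hm]
    exact ⟨hm.choose_spec.1, hm.choose_spec.2⟩
  have hγ0 : γ 0 = x₁ := by
    have hm := hγmem 0 ⟨le_refl 0, hd0.le⟩
    exact (h.isometric u hu x₁ hx₁ (γ 0) hm.1 x₁ hx₁mem).1 (by rw [hm.2, hσ0])
  have hγd : γ d = x₂ := by
    have hm := hγmem d ⟨hd0.le, le_refl d⟩
    exact (h.isometric u hu x₁ hx₁ (γ d) hm.1 x₂ hx₂).1 (by rw [hm.2, hσd])
  refine ⟨γ, hγ0, hγd, ?_, ?_⟩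
  · intro s hs t ht
    have hgs := hγmem s hs
    have hgt := hγmem t ht
    rw [(h.isometric u hu x₁ hx₁ (γ s) hgs.1 (γ t) hgt.1).2, hgs.2, hgt.2, hinner,
      ← Real.cos_abs]
    exact Real.arccos_cos (abs_nonneg _)
      (by rw [abs_sub_le_iff]; constructor <;>
        linarith [hs.1, hs.2, ht.1, ht.2, hdpi.le])
  · intro t ht
    rw [(hγmem t ht).2]
    exact hHu t ht
end

section
/- Assume the standing hypotheses (★). Call a map γ : [a,b] → X a geodesic if every t ∈ [a,b] has ε > 0 with dist(γ(s), γ(s')) = |s − s'| for all s, s' ∈ [a,b] ∩ (t−ε, t+ε). Suppose γ₁, γ₂ : [0, 2π] → X are geodesics with γ₁(0) = γ₂(0), and suppose the images of Ψ∘γ₁ and Ψ∘γ₂ are two distinct great circles in S. Then γ₂(0) = γ₂(2π) (and likewise γ₁(0) = γ₁(2π)). -/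
open RealInnerProductSpace

open RealInnerProductSpace Real Set


private lemma joinarc {X : Type*} [MetricSpace X] {F : Set X} {c : ℝ → X} {a b : ℝ}
    (hab : a ≤ b) (hc : ContinuousOn c (Set.Icc a b))
    (hF : ∀ s ∈ Set.Icc a b, c s ∈ F) : JoinedIn F (c a) (c b) := by
  have hmem : ∀ t : unitInterval, a + (t : ℝ) * (b - a) ∈ Set.Icc a b := by
    intro t
    constructor
    · nlinarith [t.2.1, t.2.2]
    · nlinarith [t.2.1, t.2.2]
  refine ⟨⟨⟨fun t => c (a + (t : ℝ) * (b - a)), ?_⟩, ?_, ?_⟩, ?_⟩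
  · exact hc.comp_continuous (by continuity) hmem
  · simp
  · simp
  · intro t
    exact hF _ (hmem t)

private lemma half_lemma {E : Type*} [NormedAddCommGroup E] [InnerProductSpace ℝ E]
    {X : Type*} [MetricSpace X] {Ψ : X → E} (h : StarHyp E X Ψ)
    {α β : ℝ → X} {f a b : E}
    (hcα : ContinuousOn α (Set.Icc 0 π)) (hcβ : ContinuousOn β (Set.Icc 0 π))
    (hf : ‖f‖ = 1) (ha : ‖a‖ = 1) (hb : ‖b‖ = 1)
    (hfa : ⟪f, a⟫ = 0) (hfb : ⟪f, b⟫ = 0) (hab : a ≠ -b)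
    (hα : ∀ s ∈ Set.Icc (0:ℝ) π, Ψ (α s) = Real.cos s • f + Real.sin s • a)
    (hβ : ∀ s ∈ Set.Icc (0:ℝ) π, Ψ (β s) = Real.cos s • f + Real.sin s • b)
    (h0 : α 0 = β 0) : α π = β π := by
  have hff : ⟪f, f⟫ = 1 := by rw [real_inner_self_eq_norm_mul_norm, hf]; ring
  have haa : ⟪a, a⟫ = 1 := by rw [real_inner_self_eq_norm_mul_norm, ha]; ring
  have hbb : ⟪b, b⟫ = 1 := by rw [real_inner_self_eq_norm_mul_norm, hb]; ring
  have haf : ⟪a, f⟫ = 0 := by rw [real_inner_comm]; exact hfa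
  have hbf : ⟪b, f⟫ = 0 := by rw [real_inner_comm]; exact hfb
  set c : ℝ := ⟪a, b⟫ with hcdef
  have hba : ⟪b, a⟫ = c := by rw [real_inner_comm]
  have hcgt : -1 < c := by
    rcases lt_or_eq_of_le (neg_le_of_abs_le (by
      have := abs_real_inner_le_norm a b
      rw [ha, hb] at this; simpa using this)) with h' | h'
    · exact h'
    · exfalso
      apply hab
      have h2 : ⟪a + b, a + b⟫ = 0 := by
        rw [inner_add_left, inner_add_right, inner_add_right, haa, hbb, hba]
        have hc1 : c = -1 := by rw [hcdef, ← h']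
        linarith
      exact eq_neg_of_add_eq_zero_left (inner_self_eq_zero.mp h2)

  have hπpos := Real.pi_pos
  have hπ2 : (0:ℝ) ≤ π/2 := by linarith
  have hπ2π : π/2 ≤ π := by linarith
  set u : E := f + (a + b) with hudef
  have hfu : ⟪f, u⟫ = 1 := by
    simp only [hudef, inner_add_right, hff, hfa, hfb]; ring
  have hau : ⟪a, u⟫ = 1 + c := by
    simp only [hudef, inner_add_right, haf, haa, ← hcdef]; ring
  have hbu : ⟪b, u⟫ = 1 + c := by
    simp only [hudef, inner_add_right, hbf, hbb, hba]; ring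
  have hu0 : u ≠ 0 := by
    intro h'
    rw [h', inner_zero_right] at hfu
    norm_num at hfu
  set u' : E := (a + b) - f with hu'def
  have hfu' : ⟪f, u'⟫ = -1 := by
    simp only [hu'def, inner_sub_right, inner_add_right, hff, hfa, hfb]; ring
  have hau' : ⟪a, u'⟫ = 1 + c := by
    simp only [hu'def, inner_sub_right, inner_add_right, haf, haa, ← hcdef]; ring
  have hbu' : ⟪b, u'⟫ = 1 + c := by
    simp only [hu'def, inner_sub_right, inner_add_right, hbf, hbb, hba]; ring
  have hu'0 : u' ≠ 0 := by
    intro h'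
    rw [h', inner_zero_right] at hfu'
    norm_num at hfu'
  have hcu : ∀ (s : ℝ) (w : E), ⟪w, u⟫ = 1 + c →
      ⟪Real.cos s • f + Real.sin s • w, u⟫ = Real.cos s + Real.sin s * (1+c) := by
    intro s w hw
    rw [inner_add_left, real_inner_smul_left, real_inner_smul_left, hfu, hw]; ring
  have hcu' : ∀ (s : ℝ) (w : E), ⟪w, u'⟫ = 1 + c →
      ⟪Real.cos s • f + Real.sin s • w, u'⟫ = Real.sin s * (1+c) - Real.cos s := by
    intro s w hw
    rw [inner_add_left, real_inner_smul_left, real_inner_smul_left, hfu', hw]; ring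
  have hc1 : 0 < 1 + c := by linarith
  have P1 : ∀ s ∈ Icc (0:ℝ) (π/2), 0 < Real.cos s + Real.sin s * (1+c) := by
    intro s hs
    have hsin : 0 ≤ Real.sin s := Real.sin_nonneg_of_nonneg_of_le_pi hs.1 (by linarith [hs.2])
    rcases lt_or_eq_of_le hs.2 with h' | h'
    · have hcos : 0 < Real.cos s := Real.cos_pos_of_mem_Ioo ⟨by linarith [hs.1], h'⟩
      nlinarith
    · rw [h', Real.cos_pi_div_two, Real.sin_pi_div_two]; linarith
  have P2 : ∀ s ∈ Icc (π/2) π, 0 < Real.sin s * (1+c) - Real.cos s := by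
    intro s hs
    have hsin : 0 ≤ Real.sin s := Real.sin_nonneg_of_nonneg_of_le_pi (by linarith [hs.1]) hs.2
    rcases lt_or_eq_of_le hs.1 with h' | h'
    · have hcos : Real.cos s < 0 :=
        Real.cos_neg_of_pi_div_two_lt_of_lt h' (by linarith [hs.2])
      nlinarith
    · rw [← h', Real.cos_pi_div_two, Real.sin_pi_div_two]; linarith
  have hΨα0 : Ψ (α 0) = f := by
    rw [hα 0 ⟨le_refl _, le_of_lt hπpos⟩]; simp
  have hΨαh : Ψ (α (π/2)) = a := by
    rw [hα (π/2) ⟨hπ2, hπ2π⟩, Real.cos_pi_div_two, Real.sin_pi_div_two]; simp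
  have hΨβh : Ψ (β (π/2)) = b := by
    rw [hβ (π/2) ⟨hπ2, hπ2π⟩, Real.cos_pi_div_two, Real.sin_pi_div_two]; simp
  have hΨαπ : Ψ (α π) = -f := by
    rw [hα π ⟨le_of_lt hπpos, le_refl _⟩, Real.cos_pi, Real.sin_pi]; simp
  have hΨβπ : Ψ (β π) = -f := by
    rw [hβ π ⟨le_of_lt hπpos, le_refl _⟩, Real.cos_pi, Real.sin_pi]; simp
  have hpos : 0 < ⟪Ψ (α 0), u⟫ := by rw [hΨα0, hfu]; norm_num
  have hJα : JoinedIn (Ψ ⁻¹' {f : E | 0 < ⟪f, u⟫}) (α 0) (α (π/2)) := by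
    refine joinarc hπ2 (hcα.mono (Icc_subset_Icc (le_refl _) hπ2π)) ?_
    intro s hs
    simp only [Set.mem_preimage, Set.mem_setOf_eq]
    rw [hα s ⟨hs.1, le_trans hs.2 hπ2π⟩, hcu s a hau]
    exact P1 s hs
  have hJβ : JoinedIn (Ψ ⁻¹' {f : E | 0 < ⟪f, u⟫}) (β 0) (β (π/2)) := by
    refine joinarc hπ2 (hcβ.mono (Icc_subset_Icc (le_refl _) hπ2π)) ?_
    intro s hs
    simp only [Set.mem_preimage, Set.mem_setOf_eq]
    rw [hβ s ⟨hs.1, le_trans hs.2 hπ2π⟩, hcu s b hbu]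
    exact P1 s hs
  have hαN : α (π/2) ∈ pathComponentIn (Ψ ⁻¹' {f : E | 0 < ⟪f, u⟫}) (α 0) := hJα
  have hβN : β (π/2) ∈ pathComponentIn (Ψ ⁻¹' {f : E | 0 < ⟪f, u⟫}) (α 0) := by
    rw [h0]; exact hJβ
  obtain ⟨C, hCadd, hCsmul, hCimg⟩ := h.image_convex u hu0 (α 0) hpos
  have haC : a ∈ C := by
    have hmem : Ψ (α (π/2)) ∈ Ψ '' pathComponentIn (Ψ ⁻¹' {f : E | 0 < ⟪f, u⟫}) (α 0) :=
      ⟨α (π/2), hαN, rfl⟩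
    rw [hCimg] at hmem
    rw [← hΨαh]
    exact hmem.1.2
  have hbC : b ∈ C := by
    have hmem : Ψ (β (π/2)) ∈ Ψ '' pathComponentIn (Ψ ⁻¹' {f : E | 0 < ⟪f, u⟫}) (α 0) :=
      ⟨β (π/2), hβN, rfl⟩
    rw [hCimg] at hmem
    rw [← hΨβh]
    exact hmem.1.2
  set m : ℝ → E := fun t => (1-t) • a + t • b with hmdef
  have hm0 : ∀ t ∈ Icc (0:ℝ) 1, m t ≠ 0 := by
    intro t ht hz
    have hsum : (1-t) • a + t • b = 0 := hz
    have heq : (1 - t) • a = -(t • b) := eq_neg_of_add_eq_zero_left hsum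
    have hnorm := congrArg norm heq
    rw [norm_smul, norm_neg, norm_smul, ha, hb, Real.norm_eq_abs, Real.norm_eq_abs] at hnorm
    rw [_root_.abs_of_nonneg (by linarith [ht.2] : (0:ℝ) ≤ 1 - t),
      _root_.abs_of_nonneg ht.1] at hnorm
    have ht2 : t = 1/2 := by linarith [hnorm]
    apply hab
    rw [ht2] at hsum
    have hhalf : (1/2 : ℝ) • (a + b) = 0 := by
      rw [smul_add]
      convert hsum using 2
      norm_num
    have hab0 : a + b = 0 := by
      rcases smul_eq_zero.mp hhalf with h' | h'
      · norm_num at h'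
      · exact h'
    exact eq_neg_of_add_eq_zero_left hab0
  have hmC : Continuous m :=
    ((continuous_const.sub continuous_id).smul continuous_const).add
      (continuous_id.smul continuous_const)
  have hmu : ∀ t : ℝ, ⟪m t, u⟫ = 1 + c := by
    intro t
    simp only [hmdef]
    rw [inner_add_left, real_inner_smul_left, real_inner_smul_left, hau, hbu]; ring
  have hmu' : ∀ t : ℝ, ⟪m t, u'⟫ = 1 + c := by
    intro t
    simp only [hmdef]
    rw [inner_add_left, real_inner_smul_left, real_inner_smul_left, hau', hbu']; ring
  set g : ℝ → E := fun t => ‖m t‖⁻¹ • m t with hgdef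
  have hgS : ∀ t ∈ Icc (0:ℝ) 1, ‖g t‖ = 1 := fun t ht => norm_smul_inv_norm (hm0 t ht)
  have hmCmem : ∀ t ∈ Icc (0:ℝ) 1, m t ∈ C := by
    intro t ht
    rcases eq_or_lt_of_le ht.1 with h' | h'
    · simp only [hmdef]
      rw [← h']
      simpa using haC
    rcases eq_or_lt_of_le ht.2 with h'' | h''
    · simp only [hmdef]
      rw [h'']
      simpa using hbC
    · exact hCadd _ (hCsmul (1-t) (by linarith) a haC) _ (hCsmul t h' b hbC)
  have hgC : ∀ t ∈ Icc (0:ℝ) 1, g t ∈ C := fun t ht =>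
    hCsmul _ (inv_pos.mpr (norm_pos_iff.mpr (hm0 t ht))) _ (hmCmem t ht)
  have hgu : ∀ t ∈ Icc (0:ℝ) 1, 0 < ⟪g t, u⟫ := by
    intro t ht
    simp only [hgdef]
    rw [real_inner_smul_left, hmu]
    exact mul_pos (inv_pos.mpr (norm_pos_iff.mpr (hm0 t ht))) hc1
  have hgu' : ∀ t ∈ Icc (0:ℝ) 1, 0 < ⟪g t, u'⟫ := by
    intro t ht
    simp only [hgdef]
    rw [real_inner_smul_left, hmu']
    exact mul_pos (inv_pos.mpr (norm_pos_iff.mpr (hm0 t ht))) hc1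
  have hgN : ∀ t ∈ Icc (0:ℝ) 1,
      ∃ x, x ∈ pathComponentIn (Ψ ⁻¹' {f : E | 0 < ⟪f, u⟫}) (α 0) ∧ Ψ x = g t := by
    intro t ht
    have hmem : g t ∈ Ψ '' pathComponentIn (Ψ ⁻¹' {f : E | 0 < ⟪f, u⟫}) (α 0) := by
      rw [hCimg]
      exact ⟨⟨hgS t ht, hgC t ht⟩, hgu t ht⟩
    exact hmem
  classical
  set φ : ℝ → X := fun t => if ht : t ∈ Icc (0:ℝ) 1 then (hgN t ht).choose else α 0 with hφdef
  have hφspec : ∀ t (ht : t ∈ Icc (0:ℝ) 1),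
      φ t ∈ pathComponentIn (Ψ ⁻¹' {f : E | 0 < ⟪f, u⟫}) (α 0) ∧ Ψ (φ t) = g t := by
    intro t ht
    simp only [hφdef, dif_pos ht]
    exact (hgN t ht).choose_spec
  have hiso := h.isometric u hu0 (α 0) hpos
  have h01 : (0:ℝ) ∈ Icc (0:ℝ) 1 := ⟨le_refl _, by norm_num⟩
  have h11 : (1:ℝ) ∈ Icc (0:ℝ) 1 := ⟨by norm_num, le_refl _⟩
  have hma : m 0 = a := by
    simp only [hmdef]
    norm_num
  have hmb : m 1 = b := by
    simp only [hmdef]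
    norm_num
  have hg0 : g 0 = a := by
    show ‖m 0‖⁻¹ • m 0 = a
    rw [hma, ha]
    norm_num
  have hg1 : g 1 = b := by
    show ‖m 1‖⁻¹ • m 1 = b
    rw [hmb, hb]
    norm_num
  have hφ0 : φ 0 = α (π/2) :=
    (hiso _ (hφspec 0 h01).1 _ hαN).1 (by rw [(hφspec 0 h01).2, hg0, hΨαh])
  have hφ1 : φ 1 = β (π/2) :=
    (hiso _ (hφspec 1 h11).1 _ hβN).1 (by rw [(hφspec 1 h11).2, hg1, hΨβh])
  have hgcont : ContinuousOn g (Icc (0:ℝ) 1) := by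
    apply ContinuousOn.smul
    · exact (hmC.norm.continuousOn).inv₀ (fun t ht => norm_ne_zero_iff.mpr (hm0 t ht))
    · exact hmC.continuousOn
  have hφcont : ContinuousOn φ (Icc (0:ℝ) 1) := by
    intro t ht
    have hdist : ∀ t' (ht' : t' ∈ Icc (0:ℝ) 1),
        dist (φ t') (φ t) = Real.arccos ⟪g t', g t⟫ := by
      intro t' ht'
      rw [← (hφspec t' ht').2, ← (hφspec t ht).2]
      exact (hiso _ (hφspec t' ht').1 _ (hφspec t ht).1).2
    rw [ContinuousWithinAt, tendsto_iff_dist_tendsto_zero]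
    have hF : ContinuousWithinAt (fun t' => Real.arccos ⟪g t', g t⟫) (Icc (0:ℝ) 1) t := by
      apply Real.continuous_arccos.continuousAt.comp_continuousWithinAt
      exact (hgcont t ht).inner continuousWithinAt_const
    have hF0 : Real.arccos ⟪g t, g t⟫ = 0 := by
      rw [real_inner_self_eq_norm_mul_norm, hgS t ht]
      norm_num [Real.arccos_one]
    rw [ContinuousWithinAt, hF0] at hF
    refine hF.congr' ?_
    exact eventually_mem_nhdsWithin.mono (fun t' ht' => (hdist t' ht').symm)
  have hJφ : JoinedIn (Ψ ⁻¹' {f : E | 0 < ⟪f, u'⟫}) (α (π/2)) (β (π/2)) := by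
    have hj := joinarc (F := Ψ ⁻¹' {f : E | 0 < ⟪f, u'⟫}) (by norm_num : (0:ℝ) ≤ 1) hφcont (fun t ht => by
      show 0 < ⟪Ψ (φ t), u'⟫
      rw [(hφspec t ht).2]
      exact hgu' t ht)
    rwa [hφ0, hφ1] at hj
  have hJα' : JoinedIn (Ψ ⁻¹' {f : E | 0 < ⟪f, u'⟫}) (α (π/2)) (α π) := by
    refine joinarc hπ2π (hcα.mono (Icc_subset_Icc hπ2 (le_refl _))) ?_
    intro s hs
    simp only [Set.mem_preimage, Set.mem_setOf_eq]
    rw [hα s ⟨le_trans hπ2 hs.1, hs.2⟩, hcu' s a hau']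
    exact P2 s hs
  have hJβ' : JoinedIn (Ψ ⁻¹' {f : E | 0 < ⟪f, u'⟫}) (β (π/2)) (β π) := by
    refine joinarc hπ2π (hcβ.mono (Icc_subset_Icc hπ2 (le_refl _))) ?_
    intro s hs
    simp only [Set.mem_preimage, Set.mem_setOf_eq]
    rw [hβ s ⟨le_trans hπ2 hs.1, hs.2⟩, hcu' s b hbu']
    exact P2 s hs
  have hposπ : 0 < ⟪Ψ (α π), u'⟫ := by
    rw [hΨαπ, inner_neg_left, hfu']
    norm_num
  have hαπmem : α π ∈ Ψ ⁻¹' {f : E | 0 < ⟪f, u'⟫} := by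
    simp only [Set.mem_preimage, Set.mem_setOf_eq]
    exact hposπ
  have hchain : JoinedIn (Ψ ⁻¹' {f : E | 0 < ⟪f, u'⟫}) (α π) (β π) :=
    (hJα'.symm.trans hJφ).trans hJβ'
  have hisoπ := h.isometric u' hu'0 (α π) hposπ
  exact (hisoπ _ (JoinedIn.refl hαπmem) _ hchain).1 (by rw [hΨαπ, hΨβπ])

private lemma geod_contOn {X : Type*} [MetricSpace X] {γ : ℝ → X} {T : ℝ}
    (hg : ∀ t ∈ Set.Icc (0:ℝ) T, ∃ ε > 0, ∀ s ∈ Set.Icc (0:ℝ) T, ∀ s' ∈ Set.Icc (0:ℝ) T,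
      |s - t| < ε → |s' - t| < ε → dist (γ s) (γ s') = |s - s'|) :
    ContinuousOn γ (Set.Icc 0 T) := by
  intro t ht
  obtain ⟨ε, hε, hloc⟩ := hg t ht
  rw [Metric.continuousWithinAt_iff]
  intro e he
  refine ⟨min ε e, lt_min hε he, ?_⟩
  intro s hs hd
  rw [Real.dist_eq] at hd
  rw [hloc s hs t ht (lt_of_lt_of_le hd (min_le_left _ _)) (by simp [hε])]
  exact lt_of_lt_of_le hd (min_le_right _ _)

private lemma local_inner {E : Type*} [NormedAddCommGroup E] [InnerProductSpace ℝ E]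
    {X : Type*} [MetricSpace X] {Ψ : X → E} (h : StarHyp E X Ψ) {γ : ℝ → X} {T : ℝ}
    (hg : ∀ t ∈ Set.Icc (0:ℝ) T, ∃ ε > 0, ∀ s ∈ Set.Icc (0:ℝ) T, ∀ s' ∈ Set.Icc (0:ℝ) T,
      |s - t| < ε → |s' - t| < ε → dist (γ s) (γ s') = |s - s'|)
    (hcont : ContinuousOn γ (Set.Icc 0 T)) :
    ∀ t ∈ Set.Icc (0:ℝ) T, ∃ ε > 0, ∀ s ∈ Set.Icc (0:ℝ) T, ∀ s' ∈ Set.Icc (0:ℝ) T,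
      |s - t| < ε → |s' - t| < ε → ⟪Ψ (γ s), Ψ (γ s')⟫ = Real.cos (s - s') := by
  intro t ht
  obtain ⟨ε₁, hε₁, hloc⟩ := hg t ht
  set u : E := Ψ (γ t) with hudef
  have hunorm : ‖u‖ = 1 := h.unit _
  have huu : ⟪u, u⟫ = 1 := by rw [real_inner_self_eq_norm_mul_norm, hunorm]; ring
  have hu0 : u ≠ 0 := by
    intro h'
    rw [h'] at hunorm
    simp at hunorm
  have hΨcont : ContinuousWithinAt (fun s => Ψ (γ s)) (Set.Icc 0 T) t :=
    (h.cont.comp_continuousOn hcont) t ht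
  rw [Metric.continuousWithinAt_iff] at hΨcont
  obtain ⟨δ, hδ, hδspec⟩ := hΨcont 1 one_pos
  set ε := min ε₁ δ with hεdef
  have hεpos : 0 < ε := lt_min hε₁ hδ
  have keypos : ∀ s ∈ Set.Icc (0:ℝ) T, |s - t| < ε → 0 < ⟪Ψ (γ s), u⟫ := by
    intro s hs hlt
    have hd : dist (Ψ (γ s)) u < 1 := by
      apply hδspec hs
      rw [Real.dist_eq]
      exact lt_of_lt_of_le hlt (min_le_right _ _)
    have hsplit : ⟪Ψ (γ s), u⟫ = ⟪Ψ (γ s) - u, u⟫ + 1 := by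
      rw [inner_sub_left, huu]; ring
    have hbound : |⟪Ψ (γ s) - u, u⟫| ≤ ‖Ψ (γ s) - u‖ * ‖u‖ := abs_real_inner_le_norm _ _
    rw [hunorm, mul_one] at hbound
    rw [dist_eq_norm] at hd
    have := neg_le_of_abs_le hbound
    rw [hsplit]
    linarith
  have hmem : ∀ s ∈ Set.Icc (0:ℝ) T, |s - t| < ε →
      γ s ∈ pathComponentIn (Ψ ⁻¹' {f : E | 0 < ⟪f, u⟫}) (γ t) := by
    intro s hs hlt
    rcases le_total t s with hts | hts
    · have habs : |s - t| = s - t := _root_.abs_of_nonneg (by linarith)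
      have hj := joinarc (F := Ψ ⁻¹' {f : E | 0 < ⟪f, u⟫}) hts
        (hcont.mono (Set.Icc_subset_Icc ht.1 hs.2)) (fun r hr => by
          show 0 < ⟪Ψ (γ r), u⟫
          refine keypos r ⟨le_trans ht.1 hr.1, le_trans hr.2 hs.2⟩ ?_
          rw [_root_.abs_of_nonneg (by linarith [hr.1] : (0:ℝ) ≤ r - t)]
          have : s - t < ε := by rw [← habs]; exact hlt
          linarith [hr.2])
      exact hj
    · have habs : |s - t| = t - s := by
        rw [abs_sub_comm]
        exact _root_.abs_of_nonneg (by linarith)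
      have hj := joinarc (F := Ψ ⁻¹' {f : E | 0 < ⟪f, u⟫}) hts
        (hcont.mono (Set.Icc_subset_Icc hs.1 ht.2)) (fun r hr => by
          show 0 < ⟪Ψ (γ r), u⟫
          refine keypos r ⟨le_trans hs.1 hr.1, le_trans hr.2 ht.2⟩ ?_
          rw [abs_sub_comm, _root_.abs_of_nonneg (by linarith [hr.2] : (0:ℝ) ≤ t - r)]
          have : t - s < ε := by rw [← habs]; exact hlt
          linarith [hr.1])
      exact hj.symm
  refine ⟨ε, hεpos, ?_⟩
  intro s hs s' hs' hl hl'
  have hd := hloc s hs s' hs' (lt_of_lt_of_le hl (min_le_left _ _))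
    (lt_of_lt_of_le hl' (min_le_left _ _))
  have hiso := h.isometric u hu0 (γ t) (by rw [← hudef, huu]; norm_num)
  have harc := (hiso _ (hmem s hs hl) _ (hmem s' hs' hl')).2
  rw [hd] at harc
  have hb : |⟪Ψ (γ s), Ψ (γ s')⟫| ≤ 1 := by
    have := abs_real_inner_le_norm (Ψ (γ s)) (Ψ (γ s'))
    rw [h.unit, h.unit, mul_one] at this
    exact this
  calc ⟪Ψ (γ s), Ψ (γ s')⟫
      = Real.cos (Real.arccos ⟪Ψ (γ s), Ψ (γ s')⟫) :=
        (Real.cos_arccos (neg_le_of_abs_le hb) (le_of_abs_le hb)).symm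
    _ = Real.cos |s - s'| := by rw [← harc]
    _ = Real.cos (s - s') := Real.cos_abs _

section CPXHelpers
open Complex

private lemma expMI (x : ℝ) : Complex.exp (x * Complex.I) =
    ⟨Real.cos x, Real.sin x⟩ := by
  apply Complex.ext
  · simpa using Complex.exp_ofReal_mul_I_re x
  · simpa using Complex.exp_ofReal_mul_I_im x

private lemma expAdd (x y : ℝ) : Complex.exp (x * Complex.I) * Complex.exp (y * Complex.I)
    = Complex.exp ((x + y : ℝ) * Complex.I) := by
  rw [← Complex.exp_add]; push_cast; ring_nf

private lemma expCancel {A B : ℂ} {x : ℝ} (h : A = B * Complex.exp (x * Complex.I)) :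
    B = A * Complex.exp ((-x : ℝ) * Complex.I) := by
  rw [h, mul_assoc, expAdd, add_neg_cancel]
  simp

private lemma cpx_dichotomy {w : ℂ} {θ : ℝ} (hw : Complex.normSq w = 1)
    (hre : w.re = Real.cos θ) :
    w = Complex.exp (θ * Complex.I) ∨ w = Complex.exp ((-θ : ℝ) * Complex.I) := by
  have him : w.im ^ 2 = (Real.sin θ) ^ 2 := by
    have h1 : w.re * w.re + w.im * w.im = 1 := by rw [← Complex.normSq_apply, hw]
    have h2 := Real.sin_sq_add_cos_sq θ
    rw [hre] at h1
    nlinarith [h1, h2]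
  rcases sq_eq_sq_iff_eq_or_eq_neg.mp him with h | h
  · left
    rw [expMI]; exact Complex.ext hre h
  · right
    rw [expMI]
    refine Complex.ext ?_ ?_
    · simpa using hre
    · simpa using h

private lemma unconj {a b E : ℂ} (hb : Complex.normSq b = 1)
    (h : a * (starRingEnd ℂ) b = E) : a = b * E := by
  have h2 : a * ((starRingEnd ℂ) b * b) = E * b := by rw [← mul_assoc, h]
  rw [mul_comm ((starRingEnd ℂ) b) b, Complex.mul_conj, hb] at h2
  simpa [mul_comm] using h2

private lemma conjExp (x : ℝ) : (starRingEnd ℂ) (Complex.exp (x * Complex.I)) =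
    Complex.exp ((-x : ℝ) * Complex.I) := by
  rw [← Complex.exp_conj, map_mul, Complex.conj_ofReal, Complex.conj_I]
  push_cast; ring_nf

private lemma exp_eq_exp_real {a b : ℝ}
    (h : Complex.exp (a * Complex.I) = Complex.exp (b * Complex.I)) :
    ∃ n : ℤ, a = b + n * (2 * π) := by
  obtain ⟨n, hn⟩ := Complex.exp_eq_exp_iff_exists_int.mp h
  refine ⟨n, ?_⟩
  have := congrArg Complex.im hn
  simpa using this

/-- two point sign matching -/
private lemma sign_match {z0 w : ℂ} (hz0 : z0 ≠ 0) {σ τ t₀ s₁ s₂ : ℝ}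
    (hσ : σ = 1 ∨ σ = -1) (hτ : τ = 1 ∨ τ = -1) (hd : s₁ ≠ s₂) (hdlt : |s₁ - s₂| < 1)
    (e₁ : z0 * Complex.exp ((σ * s₁ : ℝ) * Complex.I)
        = w * Complex.exp ((τ * (s₁ - t₀) : ℝ) * Complex.I))
    (e₂ : z0 * Complex.exp ((σ * s₂ : ℝ) * Complex.I)
        = w * Complex.exp ((τ * (s₂ - t₀) : ℝ) * Complex.I)) :
    σ = τ := by
  by_contra hne
  have w₁ : w = z0 * Complex.exp ((σ * s₁ - τ * (s₁ - t₀) : ℝ) * Complex.I) := by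
    have h' := expCancel e₁
    rw [mul_assoc, expAdd,
      (by ring : (σ * s₁ + -(τ * (s₁ - t₀)) : ℝ) = σ * s₁ - τ * (s₁ - t₀))] at h'
    exact h'
  have w₂ : w = z0 * Complex.exp ((σ * s₂ - τ * (s₂ - t₀) : ℝ) * Complex.I) := by
    have h' := expCancel e₂
    rw [mul_assoc, expAdd,
      (by ring : (σ * s₂ + -(τ * (s₂ - t₀)) : ℝ) = σ * s₂ - τ * (s₂ - t₀))] at h'
    exact h'
  have hexp : Complex.exp ((σ * s₁ - τ * (s₁ - t₀) : ℝ) * Complex.I)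
      = Complex.exp ((σ * s₂ - τ * (s₂ - t₀) : ℝ) * Complex.I) :=
    mul_left_cancel₀ hz0 (w₁.symm.trans w₂)
  obtain ⟨n, hn⟩ := exp_eq_exp_real hexp
  have key : (σ - τ) * (s₁ - s₂) = n * (2 * π) := by linarith
  have h2 : |σ - τ| = 2 := by
    rcases hσ with rfl | rfl <;> rcases hτ with rfl | rfl <;> simp_all <;> norm_num
  have habs : 2 * |s₁ - s₂| = |(n : ℝ)| * (2 * π) := by
    have hq : |(σ - τ) * (s₁ - s₂)| = |(n : ℝ) * (2 * π)| := by rw [key]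
    rwa [abs_mul, abs_mul, h2, _root_.abs_of_pos (by positivity : (0:ℝ) < 2 * π)] at hq
  have hn0 : n = 0 := by
    by_contra hn0
    have h1n : (1 : ℝ) ≤ |(n : ℝ)| := by
      have := Int.one_le_abs hn0
      exact_mod_cast this
    nlinarith [Real.pi_gt_three]
  rw [hn0] at habs
  simp at habs
  exact hd (by linarith [abs_nonneg (s₁ - s₂), abs_pos.mpr (sub_ne_zero.mpr hd)])

private lemma locsign {z : ℝ → ℂ} {T : ℝ}
    (hz : ∀ s ∈ Set.Icc (0:ℝ) T, Complex.normSq (z s) = 1)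
    (hrel : ∀ t ∈ Set.Icc (0:ℝ) T, ∃ ε > 0, ∀ s ∈ Set.Icc (0:ℝ) T, ∀ s' ∈ Set.Icc (0:ℝ) T,
      |s - t| < ε → |s' - t| < ε →
        (z s * (starRingEnd ℂ) (z s')).re = Real.cos (s - s'))
    {t : ℝ} (ht : t ∈ Set.Icc (0:ℝ) T) :
    ∃ ε > 0, ε ≤ 1 ∧ ∃ τ : ℝ, (τ = 1 ∨ τ = -1) ∧
      ∀ s ∈ Set.Icc (0:ℝ) T, |s - t| < ε →
        z s = z t * Complex.exp ((τ * (s - t) : ℝ) * Complex.I) := by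
  obtain ⟨ε₀, hε₀, hpair⟩ := hrel t ht
  set ε := min ε₀ 1 with hεdef
  have hεpos : 0 < ε := lt_min hε₀ one_pos
  have hε1 : ε ≤ 1 := min_le_right _ _
  have hεε₀ : ε ≤ ε₀ := min_le_left _ _
  have hpt : ∀ s ∈ Set.Icc (0:ℝ) T, |s - t| < ε →
      z s = z t * Complex.exp ((1 * (s - t) : ℝ) * Complex.I) ∨
      z s = z t * Complex.exp ((-1 * (s - t) : ℝ) * Complex.I) := by
    intro s hs hlt
    have hn : Complex.normSq (z s * (starRingEnd ℂ) (z t)) = 1 := by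
      rw [Complex.normSq_mul, Complex.normSq_conj, hz s hs, hz t ht]; ring
    have hre : (z s * (starRingEnd ℂ) (z t)).re = Real.cos (s - t) :=
      hpair s hs t ht (lt_of_lt_of_le hlt hεε₀) (by simpa using hε₀)
    rcases cpx_dichotomy hn hre with hw | hw
    · left
      rw [(by ring : (1 * (s - t) : ℝ) = s - t)]
      exact unconj (hz t ht) hw
    · right
      rw [(by ring : (-1 * (s - t) : ℝ) = -(s - t))]
      exact unconj (hz t ht) hw
  by_cases hplus : ∀ s ∈ Set.Icc (0:ℝ) T, |s - t| < ε →
      z s = z t * Complex.exp ((1 * (s - t) : ℝ) * Complex.I)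
  · exact ⟨ε, hεpos, hε1, 1, Or.inl rfl, hplus⟩
  by_cases hminus : ∀ s ∈ Set.Icc (0:ℝ) T, |s - t| < ε →
      z s = z t * Complex.exp ((-1 * (s - t) : ℝ) * Complex.I)
  · exact ⟨ε, hεpos, hε1, -1, Or.inr rfl, hminus⟩
  exfalso
  push_neg at hplus hminus
  obtain ⟨s', hs', hlt', hne'⟩ := hplus
  obtain ⟨s, hs, hlt, hne⟩ := hminus
  have hst : s ≠ t := by rintro rfl; exact hne (by simp)
  have hs't : s' ≠ t := by rintro rfl; exact hne' (by simp)
  have h1 : z s = z t * Complex.exp ((1 * (s - t) : ℝ) * Complex.I) :=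
    (hpt s hs hlt).resolve_right hne
  have h2 : z s' = z t * Complex.exp ((-1 * (s' - t) : ℝ) * Complex.I) :=
    (hpt s' hs' hlt').resolve_left hne'
  have hre2 : (z s * (starRingEnd ℂ) (z s')).re = Real.cos (s - s') :=
    hpair s hs s' hs' (lt_of_lt_of_le hlt hεε₀) (lt_of_lt_of_le hlt' hεε₀)
  have hzz : z s * (starRingEnd ℂ) (z s')
      = Complex.exp (((1*(s-t)) + -(-1*(s'-t)) : ℝ) * Complex.I) := by
    rw [h1, h2, map_mul, conjExp, mul_mul_mul_comm, Complex.mul_conj, hz t ht, expAdd]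
    norm_num
  rw [(by ring : ((1*(s-t)) + -(-1*(s'-t)) : ℝ) = s + s' - 2*t)] at hzz
  have hcos : Real.cos (s + s' - 2*t) = Real.cos (s - s') := by
    have h' := hre2
    rw [hzz, Complex.exp_ofReal_mul_I_re] at h'
    exact h'
  have hπ : (2:ℝ) < π := by nlinarith [Real.pi_gt_three]
  have hb1 : |s + s' - 2*t| ≤ π := by
    have : |s + s' - 2*t| ≤ |s - t| + |s' - t| := by
      have := abs_add_le (s - t) (s' - t)
      rw [(by ring : (s - t) + (s' - t) = s + s' - 2*t)] at this
      exact this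
    linarith [lt_of_lt_of_le hlt hε1, lt_of_lt_of_le hlt' hε1]
  have hb2 : |s - s'| ≤ π := by
    have : |s - s'| ≤ |s - t| + |s' - t| := by
      have h3 := abs_sub (s - t) (s' - t)
      rw [(by ring : (s - t) - (s' - t) = s - s')] at h3
      exact h3
    linarith [lt_of_lt_of_le hlt hε1, lt_of_lt_of_le hlt' hε1]
  have habs : |s + s' - 2*t| = |s - s'| :=
    Real.injOn_cos ⟨abs_nonneg _, hb1⟩ ⟨abs_nonneg _, hb2⟩
      (by rw [Real.cos_abs, Real.cos_abs]; exact hcos)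
  rcases abs_eq_abs.mp habs with heq | heq
  · exact hs't (by linarith)
  · exact hst (by linarith)

private lemma circle_param {z : ℝ → ℂ} {T : ℝ} (hT : 0 ≤ T)
    (hz : ∀ s ∈ Set.Icc (0:ℝ) T, Complex.normSq (z s) = 1)
    (hrel : ∀ t ∈ Set.Icc (0:ℝ) T, ∃ ε > 0, ∀ s ∈ Set.Icc (0:ℝ) T, ∀ s' ∈ Set.Icc (0:ℝ) T,
      |s - t| < ε → |s' - t| < ε →
        (z s * (starRingEnd ℂ) (z s')).re = Real.cos (s - s')) :
    ∃ σ : ℝ, (σ = 1 ∨ σ = -1) ∧ ∀ s ∈ Set.Icc (0:ℝ) T,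
      z s = z 0 * Complex.exp ((σ * s : ℝ) * Complex.I) := by
  have hz0ne : z 0 ≠ 0 := by
    intro h0
    have := hz 0 ⟨le_refl _, hT⟩
    rw [h0] at this
    simp at this
  set A : Set ℝ := {r ∈ Set.Icc (0:ℝ) T | ∃ σ : ℝ, (σ = 1 ∨ σ = -1) ∧
    ∀ s ∈ Set.Icc (0:ℝ) r, z s = z 0 * Complex.exp ((σ * s : ℝ) * Complex.I)} with hAdef
  have hA0 : (0:ℝ) ∈ A := by
    refine ⟨⟨le_refl _, hT⟩, 1, Or.inl rfl, ?_⟩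
    intro s hs
    have : s = 0 := le_antisymm hs.2 hs.1
    subst this
    simp
  have hAne : A.Nonempty := ⟨0, hA0⟩
  have hAbdd : BddAbove A := ⟨T, fun x hx => hx.1.2⟩
  set r₀ := sSup A with hr₀def
  have h0r : 0 ≤ r₀ := le_csSup hAbdd hA0
  have hrT : r₀ ≤ T := csSup_le hAne (fun x hx => hx.1.2)
  have hr₀Icc : r₀ ∈ Set.Icc (0:ℝ) T := ⟨h0r, hrT⟩
  -- Claim 1 : r₀ ∈ A
  obtain ⟨ε, hεpos, hε1, τ, hτ, hwin⟩ := locsign hz hrel hr₀Icc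
  have hwr₀ : z r₀ = z r₀ * Complex.exp ((τ * (r₀ - r₀) : ℝ) * Complex.I) := by simp
  have hC1 : r₀ ∈ A := by
    rcases eq_or_lt_of_le h0r with hr0 | hr0
    · rw [← hr0]; exact hA0
    · set δ := min (ε/2) (r₀/2) with hδdef
      have hδpos : 0 < δ := lt_min (by linarith) (by linarith)
      have hδε : δ ≤ ε/2 := min_le_left _ _
      have hδr : δ ≤ r₀/2 := min_le_right _ _
      obtain ⟨r, hrA, hrgt⟩ := exists_lt_of_lt_csSup hAne (by linarith : r₀ - δ < r₀)
      have hrle : r ≤ r₀ := le_csSup hAbdd hrA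
      rcases eq_or_lt_of_le hrle with hreq | hrlt
      · rw [← hreq]; exact hrA
      obtain ⟨hrIcc, σ, hσ, hQ⟩ := hrA
      have hrpos : 0 < r := by
        have : r₀ - δ ≥ r₀/2 := by linarith
        linarith
      -- two points
      set ρ := min δ r / 2 with hρdef
      have hρpos : 0 < ρ := by
        have := lt_min hδpos hrpos
        positivity
      have hρδ : ρ ≤ δ/2 := by
        have := min_le_left δ r
        simp only [hρdef]
        linarith
      have hρr : ρ ≤ r/2 := by
        have := min_le_right δ r
        simp only [hρdef]
        linarith
      have hs₁Icc : r - ρ ∈ Set.Icc (0:ℝ) r := ⟨by linarith, by linarith⟩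
      have hs₁T : r - ρ ∈ Set.Icc (0:ℝ) T := ⟨by linarith, by linarith⟩
      have hs₂T : r ∈ Set.Icc (0:ℝ) T := ⟨by linarith, by linarith⟩
      have hw1 : z (r - ρ) = z r₀ * Complex.exp ((τ * ((r - ρ) - r₀) : ℝ) * Complex.I) :=
        hwin (r - ρ) hs₁T (by
          rw [abs_sub_comm, _root_.abs_of_nonneg (show (0:ℝ) ≤ r₀ - (r - ρ) by linarith)]
          linarith)
      have hw2 : z r = z r₀ * Complex.exp ((τ * (r - r₀) : ℝ) * Complex.I) :=
        hwin r hs₂T (by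
          rw [abs_sub_comm, _root_.abs_of_nonneg (show (0:ℝ) ≤ r₀ - r by linarith)]
          linarith)
      have hq1 : z (r - ρ) = z 0 * Complex.exp ((σ * (r - ρ) : ℝ) * Complex.I) :=
        hQ (r - ρ) hs₁Icc
      have hq2 : z r = z 0 * Complex.exp ((σ * r : ℝ) * Complex.I) :=
        hQ r ⟨by linarith, le_refl _⟩
      have hστ : σ = τ :=
        sign_match hz0ne hσ hτ (by intro hc; nlinarith [hc])
          (by rw [(by ring : (r - ρ) - r = -ρ), abs_neg, _root_.abs_of_pos hρpos]; linarith)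
          (hq1.symm.trans hw1) (hq2.symm.trans hw2)
      -- extend to r₀
      refine ⟨hr₀Icc, σ, hσ, ?_⟩
      intro s hs
      rcases le_or_gt s r with hsr | hsr
      · exact hQ s ⟨hs.1, hsr⟩
      · -- use the window
        have hsT : s ∈ Set.Icc (0:ℝ) T := ⟨hs.1, le_trans hs.2 hrT⟩
        have hws : z s = z r₀ * Complex.exp ((τ * (s - r₀) : ℝ) * Complex.I) :=
          hwin s hsT (by
            rw [abs_sub_comm, _root_.abs_of_nonneg (show (0:ℝ) ≤ r₀ - s by linarith [hs.2])]
            linarith [hs.2])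
        have hzr₀ : z r₀ = z 0 * Complex.exp ((σ * r₀ : ℝ) * Complex.I) := by
          have h' := expCancel hw2
          rw [hq2, mul_assoc, expAdd,
            (by rw [hστ]; ring : (σ * r + -(τ * (r - r₀)) : ℝ) = σ * r₀)] at h'
          exact h'
        rw [hws, hzr₀, mul_assoc, expAdd,
          (by rw [hστ] : (σ * r₀ + τ * (s - r₀) : ℝ) = σ * r₀ + σ * (s - r₀)),
          (by ring : (σ * r₀ + σ * (s - r₀) : ℝ) = σ * s)]
  -- Claim 2 : r₀ = T
  have hC2 : r₀ = T := by
    by_contra hne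
    have hr₀T : r₀ < T := lt_of_le_of_ne hrT hne
    obtain ⟨_, σ, hσ, hQ⟩ := hC1
    -- match σ with τ
    have hQτ : ∀ s ∈ Set.Icc (0:ℝ) r₀, z s = z 0 * Complex.exp ((τ * s : ℝ) * Complex.I) := by
      rcases eq_or_lt_of_le h0r with hr0 | hr0
      · intro s hs
        have : s = 0 := le_antisymm (by rw [← hr0] at hs; exact hs.2) hs.1
        subst this; simp
      · set ρ := min ε r₀ / 2 with hρdef
        have hρpos : 0 < ρ := by have := lt_min hεpos hr0; positivity
        have hρε : ρ ≤ ε/2 := by have := min_le_left ε r₀; simp only [hρdef]; linarith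
        have hρr : ρ ≤ r₀/2 := by have := min_le_right ε r₀; simp only [hρdef]; linarith
        have hs₁r : r₀ - ρ ∈ Set.Icc (0:ℝ) r₀ := ⟨by linarith, by linarith⟩
        have hs₁T : r₀ - ρ ∈ Set.Icc (0:ℝ) T := ⟨by linarith, by linarith⟩
        have hw1 : z (r₀ - ρ) = z r₀ * Complex.exp ((τ * ((r₀ - ρ) - r₀) : ℝ) * Complex.I) :=
          hwin (r₀ - ρ) hs₁T (by
            rw [abs_sub_comm, _root_.abs_of_nonneg (show (0:ℝ) ≤ r₀ - (r₀ - ρ) by linarith)]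
            linarith)
        have hστ : σ = τ :=
          sign_match hz0ne hσ hτ (by intro hc; nlinarith [hc])
            (by rw [(by ring : (r₀ - ρ) - r₀ = -ρ), abs_neg, _root_.abs_of_pos hρpos]; linarith)
            ((hQ (r₀ - ρ) hs₁r).symm.trans hw1)
            ((hQ r₀ ⟨h0r, le_refl _⟩).symm.trans hwr₀)
        intro s hs
        rw [← hστ]; exact hQ s hs
    set r₁ := min T (r₀ + ε/2) with hr₁def
    have hr₁gt : r₀ < r₁ := lt_min hr₀T (by linarith)
    have hr₁A : r₁ ∈ A := by
      refine ⟨⟨by linarith, min_le_left _ _⟩, τ, hτ, ?_⟩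
      intro s hs
      rcases le_or_gt s r₀ with hsr | hsr
      · exact hQτ s ⟨hs.1, hsr⟩
      · have hsT : s ∈ Set.Icc (0:ℝ) T := ⟨hs.1, le_trans hs.2 (min_le_left _ _)⟩
        have hsε : |s - r₀| < ε := by
          rw [abs_of_pos (by linarith)]
          have := le_trans hs.2 (min_le_right _ _)
          linarith
        have hws := hwin s hsT hsε
        rw [hws, hQτ r₀ ⟨h0r, le_refl _⟩, mul_assoc, expAdd,
          (by ring : (τ * r₀ + τ * (s - r₀) : ℝ) = τ * s)]
    have := le_csSup hAbdd hr₁A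
    rw [← hr₀def] at this
    linarith
  obtain ⟨_, σ, hσ, hQ⟩ := hC1
  rw [hC2] at hQ
  exact ⟨σ, hσ, hQ⟩

end CPXHelpers

open Complex in
private lemma param_lemma {E : Type*} [NormedAddCommGroup E] [InnerProductSpace ℝ E]
    {X : Type*} [MetricSpace X] {Ψ : X → E} (h : StarHyp E X Ψ) {γ : ℝ → X}
    (hg : ∀ t ∈ Set.Icc (0:ℝ) (2*π), ∃ ε > 0, ∀ s ∈ Set.Icc (0:ℝ) (2*π),
      ∀ s' ∈ Set.Icc (0:ℝ) (2*π),
      |s - t| < ε → |s' - t| < ε → dist (γ s) (γ s') = |s - s'|)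
    {p q : E} (hp : ‖p‖ = 1) (hq : ‖q‖ = 1) (hpq : ⟪p, q⟫ = 0)
    (himg : (Ψ ∘ γ) '' Set.Icc 0 (2*π) = Set.range (fun t : ℝ => Real.cos t • p + Real.sin t • q)) :
    ∃ w : E, ‖w‖ = 1 ∧ ⟪Ψ (γ 0), w⟫ = 0 ∧
      (∀ s ∈ Set.Icc (0:ℝ) (2*π), Ψ (γ s) = Real.cos s • Ψ (γ 0) + Real.sin s • w) ∧
      (∃ x y : ℝ, Ψ (γ 0) = x • p + y • q) ∧ (∃ x y : ℝ, w = x • p + y • q) := by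
  have hcont := geod_contOn hg
  have hloc := local_inner h hg hcont
  have h2π : (0:ℝ) ≤ 2*π := by positivity
  have h00 : (0:ℝ) ∈ Set.Icc (0:ℝ) (2*π) := ⟨le_refl _, h2π⟩
  have hpp : ⟪p, p⟫ = 1 := by rw [real_inner_self_eq_norm_mul_norm, hp]; ring
  have hqq : ⟪q, q⟫ = 1 := by rw [real_inner_self_eq_norm_mul_norm, hq]; ring
  have hqp : ⟪q, p⟫ = 0 := by rw [real_inner_comm]; exact hpq
  have inner2 : ∀ x y x' y' : ℝ, ⟪x • p + y • q, x' • p + y' • q⟫ = x*x' + y*y' := by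
    intro x y x' y'
    rw [inner_add_left, inner_add_right, inner_add_right]
    rw [real_inner_smul_left, real_inner_smul_left, real_inner_smul_left, real_inner_smul_left]
    rw [real_inner_smul_right, real_inner_smul_right, real_inner_smul_right, real_inner_smul_right]
    rw [hpp, hqq, hpq, hqp]
    ring
  have hrep : ∀ s ∈ Set.Icc (0:ℝ) (2*π), ∃ θ : ℝ,
      Ψ (γ s) = Real.cos θ • p + Real.sin θ • q := by
    intro s hs
    have hmem : (Ψ ∘ γ) s ∈ (Ψ ∘ γ) '' Set.Icc 0 (2*π) := ⟨s, hs, rfl⟩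
    rw [himg] at hmem
    obtain ⟨θ, hθ⟩ := hmem
    exact ⟨θ, hθ.symm⟩
  set cc : ℝ → ℝ := fun s => ⟪Ψ (γ s), p⟫ with hccdef
  set dd : ℝ → ℝ := fun s => ⟪Ψ (γ s), q⟫ with hdddef
  have hdec : ∀ s ∈ Set.Icc (0:ℝ) (2*π),
      Ψ (γ s) = cc s • p + dd s • q ∧ cc s ^ 2 + dd s ^ 2 = 1 := by
    intro s hs
    obtain ⟨θ, hθ⟩ := hrep s hs
    have hc : cc s = Real.cos θ := by
      show ⟪Ψ (γ s), p⟫ = Real.cos θ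
      rw [hθ, inner_add_left, real_inner_smul_left, real_inner_smul_left, hpp, hqp]
      ring
    have hd : dd s = Real.sin θ := by
      show ⟪Ψ (γ s), q⟫ = Real.sin θ
      rw [hθ, inner_add_left, real_inner_smul_left, real_inner_smul_left, hpq, hqq]
      ring
    constructor
    · rw [hc, hd, hθ]
    · rw [hc, hd]
      exact Real.cos_sq_add_sin_sq θ
  set z : ℝ → ℂ := fun s => ⟨cc s, dd s⟩ with hzdef
  have hz : ∀ s ∈ Set.Icc (0:ℝ) (2*π), Complex.normSq (z s) = 1 := by
    intro s hs
    have := (hdec s hs).2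
    show Complex.normSq ⟨cc s, dd s⟩ = 1
    rw [Complex.normSq_mk]
    nlinarith [this]
  have hrel : ∀ t ∈ Set.Icc (0:ℝ) (2*π), ∃ ε > 0, ∀ s ∈ Set.Icc (0:ℝ) (2*π),
      ∀ s' ∈ Set.Icc (0:ℝ) (2*π), |s - t| < ε → |s' - t| < ε →
      (z s * (starRingEnd ℂ) (z s')).re = Real.cos (s - s') := by
    intro t ht
    obtain ⟨ε, hε, hl⟩ := hloc t ht
    refine ⟨ε, hε, ?_⟩
    intro s hs s' hs' h1 h2
    have hval := hl s hs s' hs' h1 h2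
    rw [(hdec s hs).1, (hdec s' hs').1, inner2] at hval
    have hre : (z s * (starRingEnd ℂ) (z s')).re = cc s * cc s' + dd s * dd s' := by
      show ((⟨cc s, dd s⟩ : ℂ) * (starRingEnd ℂ) (⟨cc s', dd s'⟩ : ℂ)).re = _
      simp [Complex.mul_re]
    rw [hre]
    exact hval
  obtain ⟨σ, hσ, hzf⟩ := circle_param h2π hz hrel
  have hσ2 : σ * σ = 1 := by rcases hσ with rfl | rfl <;> norm_num
  set w : E := (-(σ * dd 0)) • p + (σ * cc 0) • q with hwdef
  have hww : ⟪w, w⟫ = 1 := by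
    rw [hwdef, inner2]
    have := (hdec 0 h00).2
    nlinarith [this]
  have hwnorm : ‖w‖ = 1 := by
    have h1 : ‖w‖ * ‖w‖ = 1 := by rw [← real_inner_self_eq_norm_mul_norm, hww]
    nlinarith [norm_nonneg w]
  have hcomp : ∀ s ∈ Set.Icc (0:ℝ) (2*π),
      cc s = cc 0 * Real.cos s - σ * dd 0 * Real.sin s ∧
      dd s = dd 0 * Real.cos s + σ * cc 0 * Real.sin s := by
    intro s hs
    have hzs := hzf s hs
    rw [expMI] at hzs
    have hre := congrArg Complex.re hzs
    have him := congrArg Complex.im hzs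
    simp only [Complex.mul_re, Complex.mul_im] at hre him
    have hres : cc s = cc 0 * Real.cos (σ * s) - dd 0 * Real.sin (σ * s) := hre
    have hims : dd s = cc 0 * Real.sin (σ * s) + dd 0 * Real.cos (σ * s) := him
    rcases hσ with rfl | rfl
    · rw [one_mul] at hres hims
      constructor <;> (first | rw [hres] | rw [hims]) <;> ring
    · rw [neg_one_mul, Real.cos_neg, Real.sin_neg] at hres hims
      constructor <;> (first | rw [hres] | rw [hims]) <;> ring
  refine ⟨w, hwnorm, ?_, ?_, ?_, ?_⟩
  · rw [(hdec 0 h00).1, hwdef, inner2]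
    ring
  · intro s hs
    rw [(hdec s hs).1, (hdec 0 h00).1, hwdef, (hcomp s hs).1, (hcomp s hs).2]
    rw [smul_add, smul_add, smul_smul, smul_smul, smul_smul, smul_smul]
    rw [add_add_add_comm, ← add_smul, ← add_smul]
    congr 1 <;> [skip; skip] <;> congr 1 <;> ring
  · exact ⟨cc 0, dd 0, (hdec 0 h00).1⟩
  · exact ⟨-(σ * dd 0), σ * cc 0, rfl⟩

/-- Under the standing hypotheses (★): if `γ₁, γ₂ : [0,2π] → X` are geodesics (locally
distance-preserving maps) with `γ₁ 0 = γ₂ 0` whose images under `Ψ` are two distinct great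
circles in the unit sphere, then `γ₂ 0 = γ₂ (2π)` and `γ₁ 0 = γ₁ (2π)`. -/
theorem starHyp_two_geodesics_close_up
    {E : Type*} [NormedAddCommGroup E] [InnerProductSpace ℝ E]
    {X : Type*} [MetricSpace X] (Ψ : X → E) (h : StarHyp E X Ψ)
    (γ₁ γ₂ : ℝ → X)
    (hg₁ : ∀ t ∈ Set.Icc 0 (2 * π), ∃ ε > 0, ∀ s ∈ Set.Icc 0 (2 * π),
      ∀ s' ∈ Set.Icc 0 (2 * π), |s - t| < ε → |s' - t| < ε →
        dist (γ₁ s) (γ₁ s') = |s - s'|)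
    (hg₂ : ∀ t ∈ Set.Icc 0 (2 * π), ∃ ε > 0, ∀ s ∈ Set.Icc 0 (2 * π),
      ∀ s' ∈ Set.Icc 0 (2 * π), |s - t| < ε → |s' - t| < ε →
        dist (γ₂ s) (γ₂ s') = |s - s'|)
    (hstart : γ₁ 0 = γ₂ 0)
    (hcirc₁ : ∃ p q : E, ‖p‖ = 1 ∧ ‖q‖ = 1 ∧ ⟪p, q⟫ = 0 ∧
      (Ψ ∘ γ₁) '' Set.Icc 0 (2 * π) =
        Set.range (fun t : ℝ => Real.cos t • p + Real.sin t • q))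
    (hcirc₂ : ∃ p q : E, ‖p‖ = 1 ∧ ‖q‖ = 1 ∧ ⟪p, q⟫ = 0 ∧
      (Ψ ∘ γ₂) '' Set.Icc 0 (2 * π) =
        Set.range (fun t : ℝ => Real.cos t • p + Real.sin t • q))
    (hdistinct : (Ψ ∘ γ₁) '' Set.Icc 0 (2 * π) ≠ (Ψ ∘ γ₂) '' Set.Icc 0 (2 * π)) :
    γ₂ 0 = γ₂ (2 * π) ∧ γ₁ 0 = γ₁ (2 * π) := by
  have hπpos := Real.pi_pos
  obtain ⟨p₁, q₁, hp₁, hq₁, hpq₁, himg₁⟩ := hcirc₁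
  obtain ⟨p₂, q₂, hp₂, hq₂, hpq₂, himg₂⟩ := hcirc₂
  obtain ⟨w₁, hw₁, hfw₁, hform₁, -, -⟩ := param_lemma h hg₁ hp₁ hq₁ hpq₁ himg₁
  obtain ⟨w₂, hw₂, hfw₂, hform₂, -, -⟩ := param_lemma h hg₂ hp₂ hq₂ hpq₂ himg₂
  set f₀ : E := Ψ (γ₁ 0) with hf₀def
  have hf : ‖f₀‖ = 1 := h.unit _
  have hform₂' : ∀ s ∈ Set.Icc (0:ℝ) (2*π),
      Ψ (γ₂ s) = Real.cos s • f₀ + Real.sin s • w₂ := by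
    intro s hs
    rw [hform₂ s hs, ← hstart]
  have hfw₂' : ⟪f₀, w₂⟫ = 0 := by
    rw [hf₀def, hstart]
    exact hfw₂
  have hcont₁ := geod_contOn hg₁
  have hcont₂ := geod_contOn hg₂
  -- distinctness of the axes
  have hI₁ : (Ψ ∘ γ₁) '' Set.Icc 0 (2*π)
      = (fun s : ℝ => Real.cos s • f₀ + Real.sin s • w₁) '' Set.Icc 0 (2*π) :=
    Set.image_congr (fun s hs => hform₁ s hs)
  have hI₂ : (Ψ ∘ γ₂) '' Set.Icc 0 (2*π)
      = (fun s : ℝ => Real.cos s • f₀ + Real.sin s • w₂) '' Set.Icc 0 (2*π) :=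
    Set.image_congr (fun s hs => hform₂' s hs)
  have hwne : w₁ ≠ w₂ := by
    rintro rfl
    exact hdistinct (hI₁.trans hI₂.symm)
  have hwne' : w₁ ≠ -w₂ := by
    intro hcontra
    apply hdistinct
    rw [hI₁, hI₂, hcontra]
    ext x
    simp only [Set.mem_image]
    constructor
    · rintro ⟨s, hs, rfl⟩
      refine ⟨2*π - s, ⟨by linarith [hs.2], by linarith [hs.1]⟩, ?_⟩
      rw [Real.cos_sub, Real.sin_sub, Real.cos_two_pi, Real.sin_two_pi]
      module
    · rintro ⟨s, hs, rfl⟩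
      refine ⟨2*π - s, ⟨by linarith [hs.2], by linarith [hs.1]⟩, ?_⟩
      rw [Real.cos_sub, Real.sin_sub, Real.cos_two_pi, Real.sin_two_pi]
      module
  have hsub : Set.Icc (0:ℝ) π ⊆ Set.Icc (0:ℝ) (2*π) :=
    Set.Icc_subset_Icc (le_refl _) (by linarith)
  -- Application 1 : γ₁ π = γ₂ π
  have hm : γ₁ π = γ₂ π := by
    refine half_lemma h (hcont₁.mono hsub) (hcont₂.mono hsub) hf hw₁ hw₂ hfw₁ hfw₂' hwne'
      (fun s hs => hform₁ s (hsub hs)) (fun s hs => hform₂' s (hsub hs)) hstart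
  -- Application 2 : γ₁ (2π) = γ₂ 0
  have hmapP : ∀ s ∈ Set.Icc (0:ℝ) π, π + s ∈ Set.Icc (0:ℝ) (2*π) := by
    intro s hs
    exact ⟨by linarith [hs.1], by linarith [hs.2]⟩
  have hmapM : ∀ s ∈ Set.Icc (0:ℝ) π, π - s ∈ Set.Icc (0:ℝ) (2*π) := by
    intro s hs
    exact ⟨by linarith [hs.2], by linarith [hs.1]⟩
  have hcaP : ContinuousOn (fun s : ℝ => γ₁ (π + s)) (Set.Icc 0 π) :=
    hcont₁.comp ((continuous_const.add continuous_id).continuousOn) hmapP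
  have hcbM : ContinuousOn (fun s : ℝ => γ₂ (π - s)) (Set.Icc 0 π) :=
    hcont₂.comp ((continuous_const.sub continuous_id).continuousOn) hmapM
  have hcaP2 : ContinuousOn (fun s : ℝ => γ₂ (π + s)) (Set.Icc 0 π) :=
    hcont₂.comp ((continuous_const.add continuous_id).continuousOn) hmapP
  have hcbM1 : ContinuousOn (fun s : ℝ => γ₁ (π - s)) (Set.Icc 0 π) :=
    hcont₁.comp ((continuous_const.sub continuous_id).continuousOn) hmapM
  have hnf : ‖-f₀‖ = 1 := by rw [norm_neg]; exact hf
  have hnw₁ : ‖-w₁‖ = 1 := by rw [norm_neg]; exact hw₁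
  have hnw₂ : ‖-w₂‖ = 1 := by rw [norm_neg]; exact hw₂
  have hfa₂ : ⟪-f₀, -w₁⟫ = 0 := by rw [inner_neg_neg]; exact hfw₁
  have hfb₂ : ⟪-f₀, w₂⟫ = 0 := by rw [inner_neg_left, hfw₂']; ring
  have hfa₃ : ⟪-f₀, -w₂⟫ = 0 := by rw [inner_neg_neg]; exact hfw₂'
  have hfb₃ : ⟪-f₀, w₁⟫ = 0 := by rw [inner_neg_left, hfw₁]; ring
  have hab₂ : -w₁ ≠ -w₂ := fun hc => hwne (neg_injective hc)
  have hab₃ : -w₂ ≠ -w₁ := fun hc => hwne (neg_injective hc).symm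
  have hA2 : γ₁ (π + π) = γ₂ (π - π) := by
    refine half_lemma h (α := fun s => γ₁ (π + s)) (β := fun s => γ₂ (π - s))
      hcaP hcbM hnf hnw₁ hw₂ hfa₂ hfb₂ hab₂ ?_ ?_ ?_
    · intro s hs
      rw [hform₁ (π + s) (hmapP s hs), Real.cos_add, Real.sin_add, Real.cos_pi, Real.sin_pi]
      module
    · intro s hs
      rw [hform₂' (π - s) (hmapM s hs), Real.cos_pi_sub, Real.sin_pi_sub]
      module
    · show γ₁ (π + 0) = γ₂ (π - 0)
      rw [add_zero, sub_zero]
      exact hm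
  have hA3 : γ₂ (π + π) = γ₁ (π - π) := by
    refine half_lemma h (α := fun s => γ₂ (π + s)) (β := fun s => γ₁ (π - s))
      hcaP2 hcbM1 hnf hnw₂ hw₁ hfa₃ hfb₃ hab₃ ?_ ?_ ?_
    · intro s hs
      rw [hform₂' (π + s) (hmapP s hs), Real.cos_add, Real.sin_add, Real.cos_pi, Real.sin_pi]
      module
    · intro s hs
      rw [hform₁ (π - s) (hmapM s hs), Real.cos_pi_sub, Real.sin_pi_sub]
      module
    · show γ₂ (π + 0) = γ₁ (π - 0)
      rw [add_zero, sub_zero]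
      exact hm.symm
  rw [show π + π = 2*π by ring, show π - π = (0:ℝ) by ring] at hA2 hA3
  exact ⟨(hA3.trans hstart).symm, hstart.trans hA2.symm⟩
end

section
/- Assume the standing hypotheses (★). Then the map Ψ : X → S is injective. -/
open RealInnerProductSpace
set_option maxHeartbeats 2000000

open Real Set

/-- **Auxiliary algebraic lemma.** If `a`, `m` are unit vectors subtending an angle
`μ - α ∈ (0, π)`, and the inner products of unit vectors `p`, `r` with both `a` and `m`
are given by cosines of parameter differences, then `⟪p, r⟫ = cos (s - t)`. -/
lemma StarHyp.four_point {E : Type*} [NormedAddCommGroup E] [InnerProductSpace ℝ E]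
    (p a m r : E) (s α μ t : ℝ)
    (han : ‖a‖ = 1) (hmn : ‖m‖ = 1) (hrn : ‖r‖ = 1)
    (hd1 : 0 < μ - α) (hd2 : μ - α < π)
    (h1 : ⟪p, a⟫ = cos (s - α)) (h2 : ⟪p, m⟫ = cos (s - μ))
    (h3 : ⟪a, m⟫ = cos (α - μ)) (h4 : ⟪r, a⟫ = cos (t - α))
    (h5 : ⟪r, m⟫ = cos (t - μ)) :
    ⟪p, r⟫ = cos (s - t) := by
  have hsin : 0 < sin (μ - α) := Real.sin_pos_of_pos_of_lt_pi hd1 hd2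
  set d := μ - α with hddef
  set w : E := m - cos d • a with hwdef
  have hsne : sin d ≠ 0 := ne_of_gt hsin
  have ham : ⟪a, m⟫ = cos d := by rw [h3, show α - μ = -d by ring, Real.cos_neg]
  have key : ∀ z : E, ⟪z, w⟫ = ⟪z, m⟫ - cos d * ⟪z, a⟫ := by
    intro z; rw [hwdef, inner_sub_right, real_inner_smul_right]
  have hrw : ⟪r, w⟫ = sin (t - α) * sin d := by
    rw [key, h5, h4, show t - μ = (t - α) - d by ring, Real.cos_sub]; ring
  have hpw : ⟪p, w⟫ = sin (s - α) * sin d := by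
    rw [key, h2, h1, show s - μ = (s - α) - d by ring, Real.cos_sub]; ring
  have haw : ⟪a, w⟫ = 0 := by
    rw [key, ham, real_inner_self_eq_norm_sq, han]; ring
  have hmw : ⟪m, w⟫ = sin d ^ 2 := by
    rw [key, real_inner_self_eq_norm_sq, real_inner_comm a m, ham, hmn]
    nlinarith [Real.sin_sq_add_cos_sq d]
  have hww : ⟪w, w⟫ = sin d ^ 2 := by
    rw [key, real_inner_comm m w, hmw, real_inner_comm a w, haw]; ring
  have hr : r = cos (t - α) • a + (sin (t - α) / sin d) • w := by
    rw [← sub_eq_zero, ← inner_self_eq_zero (𝕜 := ℝ)]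
    simp only [inner_sub_left, inner_sub_right, inner_add_left, inner_add_right,
      real_inner_smul_left, real_inner_smul_right]
    rw [real_inner_comm r a, real_inner_comm r w, real_inner_comm a w,
      real_inner_self_eq_norm_sq a, real_inner_self_eq_norm_sq r, hww,
      h4, hrw, haw, hrn, han]
    have e2 : sin (t - α) / sin d * (sin (t - α) / sin d * sin d ^ 2) = sin (t - α) ^ 2 := by
      field_simp
    have e1 : sin (t - α) / sin d * (sin (t - α) * sin d) = sin (t - α) ^ 2 := by
      field_simp
    rw [e1, e2]
    nlinarith [Real.sin_sq_add_cos_sq (t - α)]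
  rw [hr, inner_add_right, real_inner_smul_right, real_inner_smul_right, h1, hpw]
  have e3 : sin (t - α) / sin d * (sin (s - α) * sin d) = sin (t - α) * sin (s - α) := by
    field_simp
  rw [e3]
  conv_rhs => rw [show s - t = (s - α) - (t - α) by ring, Real.cos_sub]
  ring

/-- A continuous integer-valued function on `[0, L]` takes the same value at the
endpoints. -/
lemma StarHyp.int_valued_eq {f : ℝ → ℝ} {L : ℝ} (hL : 0 ≤ L)
    (hf : ContinuousOn f (Icc 0 L))
    (hint : ∀ s ∈ Icc 0 L, ∃ m : ℤ, (m : ℝ) = f s) : f L = f 0 := by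
  have h0 : (0:ℝ) ∈ Icc (0:ℝ) L := ⟨le_refl _, hL⟩
  have hLm : L ∈ Icc (0:ℝ) L := ⟨hL, le_refl _⟩
  obtain ⟨m₀, hm₀⟩ := hint 0 h0
  obtain ⟨m₁, hm₁⟩ := hint L hLm
  rcases lt_trichotomy (f 0) (f L) with hlt | heq | hgt
  · exfalso
    have hmlt : m₀ < m₁ := by exact_mod_cast hm₀ ▸ hm₁ ▸ hlt
    have hξ : (m₀ : ℝ) + 1/2 ∈ Icc (f 0) (f L) := by
      constructor
      · rw [← hm₀]; linarith
      · rw [← hm₁]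
        have : (m₀ : ℝ) + 1 ≤ m₁ := by exact_mod_cast hmlt
        linarith
    obtain ⟨s₀, hs₀, hfs₀⟩ := intermediate_value_Icc hL hf hξ
    obtain ⟨m, hm⟩ := hint s₀ hs₀
    rw [← hm] at hfs₀
    have : (2 * m : ℤ) = 2 * m₀ + 1 := by
      have : (2 * m : ℝ) = 2 * m₀ + 1 := by linarith
      exact_mod_cast this
    omega
  · exact heq.symm
  · exfalso
    have hmlt : m₁ < m₀ := by exact_mod_cast hm₁ ▸ hm₀ ▸ hgt
    have hξ : (m₁ : ℝ) + 1/2 ∈ Icc (f L) (f 0) := by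
      constructor
      · rw [← hm₁]; linarith
      · rw [← hm₀]
        have : (m₁ : ℝ) + 1 ≤ m₀ := by exact_mod_cast hmlt
        linarith
    obtain ⟨s₀, hs₀, hfs₀⟩ := intermediate_value_Icc' hL hf hξ
    obtain ⟨m, hm⟩ := hint s₀ hs₀
    rw [← hm] at hfs₀
    have : (2 * m : ℤ) = 2 * m₁ + 1 := by
      have : (2 * m : ℝ) = 2 * m₁ + 1 := by linarith
      exact_mod_cast this
    omega

/-- **Development lemma.** Under (★) the map `Ψ` satisfies the global identity
`cos (dist p₁ p₂) = ⟪Ψ p₁, Ψ p₂⟫`: along any minimizing geodesic the image curve develops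
onto a unit-speed great circle. -/
lemma StarHyp.cos_dist {E : Type*} [NormedAddCommGroup E] [InnerProductSpace ℝ E]
    {X : Type*} [MetricSpace X] {Ψ : X → E} (h : StarHyp E X Ψ) (p₁ p₂ : X) :
    Real.cos (dist p₁ p₂) = ⟪Ψ p₁, Ψ p₂⟫ := by
  obtain ⟨γ, hγ0, hγL, hgeo⟩ := h.geodesicSpace p₁ p₂
  set L := dist p₁ p₂ with hLdef
  have hL0 : (0:ℝ) ≤ L := dist_nonneg
  have h0mem : (0:ℝ) ∈ Icc (0:ℝ) L := ⟨le_refl 0, hL0⟩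
  have hLmem : L ∈ Icc (0:ℝ) L := ⟨hL0, le_refl L⟩
  have hγc : ContinuousOn γ (Icc 0 L) := by
    apply LipschitzOnWith.continuousOn (K := 1)
    apply LipschitzOnWith.of_dist_le_mul
    intro s hs t ht
    rw [hgeo s hs t ht, Real.dist_eq]
    simp
  have hcc : ContinuousOn (fun s => Ψ (γ s)) (Icc 0 L) := h.cont.comp_continuousOn hγc
  have huc := isCompact_Icc.uniformContinuousOn_of_continuous hcc
  rw [Metric.uniformContinuousOn_iff] at huc
  obtain ⟨δ₀, hδ₀, hucd⟩ := huc 1 one_pos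
  set δ := min (δ₀ / 2) 1 with hδdef
  have hδpos : 0 < δ := lt_min (by linarith) one_pos
  have hδ1 : δ ≤ 1 := min_le_right _ _
  have hδπ : δ < π := lt_of_le_of_lt hδ1 (by linarith [Real.pi_gt_three])
  have hinner_pos : ∀ t₀ ∈ Icc (0:ℝ) L, ∀ w ∈ Icc (0:ℝ) L, |w - t₀| ≤ δ →
      (0:ℝ) < ⟪Ψ (γ w), Ψ (γ t₀)⟫ := by
    intro t₀ ht₀ w hw hww
    have hd : dist w t₀ < δ₀ := by
      rw [Real.dist_eq]
      calc |w - t₀| ≤ δ := hww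
        _ ≤ δ₀ / 2 := min_le_left _ _
        _ < δ₀ := by linarith
    have h1 := hucd w hw t₀ ht₀ hd
    rw [dist_eq_norm] at h1
    nlinarith [norm_sub_sq_real (Ψ (γ w)) (Ψ (γ t₀)), h.unit (γ w), h.unit (γ t₀),
      norm_nonneg (Ψ (γ w) - Ψ (γ t₀))]
  have hmem : ∀ t₀ ∈ Icc (0:ℝ) L, ∀ s ∈ Icc (0:ℝ) L, |s - t₀| ≤ δ →
      γ s ∈ pathComponentIn (Ψ ⁻¹' {f : E | 0 < ⟪f, Ψ (γ t₀)⟫}) (γ t₀) := by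
    intro t₀ ht₀ s hs hst
    have hmm : ∀ r : ℝ, 0 ≤ r → r ≤ 1 → ((1 - r) * t₀ + r * s ∈ Icc (0:ℝ) L ∧
        |((1 - r) * t₀ + r * s) - t₀| ≤ δ) := by
      intro r hr0 hr1
      obtain ⟨ht₀0, ht₀L⟩ := ht₀; obtain ⟨hs0, hsL⟩ := hs
      refine ⟨⟨by nlinarith, by nlinarith⟩, ?_⟩
      have hrr : (1 - r) * t₀ + r * s - t₀ = r * (s - t₀) := by ring
      rw [hrr, abs_mul, abs_of_nonneg hr0]
      calc r * |s - t₀| ≤ 1 * |s - t₀| := by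
            apply mul_le_mul_of_nonneg_right hr1 (abs_nonneg _)
        _ ≤ δ := by rw [one_mul]; exact hst
    have hmcont : Continuous fun r : unitInterval => (1 - (r:ℝ)) * t₀ + (r:ℝ) * s :=
      ((continuous_const.sub continuous_subtype_val).mul continuous_const).add
        (continuous_subtype_val.mul continuous_const)
    refine ⟨⟨⟨fun r => γ ((1 - (r:ℝ)) * t₀ + (r:ℝ) * s), ?_⟩, ?_, ?_⟩, ?_⟩
    · exact hγc.comp_continuous hmcont fun r => (hmm r r.2.1 r.2.2).1
    · show γ _ = γ t₀
      norm_num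
    · show γ _ = γ s
      norm_num
    · intro r
      exact hinner_pos t₀ ht₀ _ (hmm r r.2.1 r.2.2).1 (hmm r r.2.1 r.2.2).2
  have hloc : ∀ t₀ ∈ Icc (0:ℝ) L, ∀ s ∈ Icc (0:ℝ) L, ∀ t ∈ Icc (0:ℝ) L,
      |s - t₀| ≤ δ → |t - t₀| ≤ δ → ⟪Ψ (γ s), Ψ (γ t)⟫ = Real.cos (s - t) := by
    intro t₀ ht₀ s hs t ht hs' ht'
    have hu0 : Ψ (γ t₀) ≠ 0 := by
      intro hz
      have := h.unit (γ t₀); rw [hz, norm_zero] at this; norm_num at this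
    have hself : 0 < ⟪Ψ (γ t₀), Ψ (γ t₀)⟫ := by
      rw [real_inner_self_eq_norm_sq, h.unit]; norm_num
    obtain ⟨-, hdist⟩ := h.isometric (Ψ (γ t₀)) hu0 (γ t₀) hself (γ s)
      (hmem t₀ ht₀ s hs hs') (γ t) (hmem t₀ ht₀ t ht ht')
    have habs : |⟪Ψ (γ s), Ψ (γ t)⟫| ≤ 1 := by
      have := abs_real_inner_le_norm (Ψ (γ s)) (Ψ (γ t))
      rwa [h.unit, h.unit, one_mul] at this
    have harc : Real.arccos ⟪Ψ (γ s), Ψ (γ t)⟫ = |s - t| := by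
      rw [← hdist, hgeo s hs t ht]
    rw [abs_le] at habs
    calc ⟪Ψ (γ s), Ψ (γ t)⟫ = Real.cos (Real.arccos ⟪Ψ (γ s), Ψ (γ t)⟫) :=
          (Real.cos_arccos habs.1 habs.2).symm
      _ = Real.cos |s - t| := by rw [harc]
      _ = Real.cos (s - t) := Real.cos_abs _
  have hmain : ∀ n : ℕ, ∀ s ∈ Icc (0:ℝ) L, ∀ t ∈ Icc (0:ℝ) L, s ≤ n * δ → t ≤ n * δ →
      ⟪Ψ (γ s), Ψ (γ t)⟫ = Real.cos (s - t) := by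
    intro n
    induction n with
    | zero =>
      intro s hs t ht hsn htn
      have hs0 : s = 0 := le_antisymm (by simpa using hsn) hs.1
      have ht0 : t = 0 := le_antisymm (by simpa using htn) ht.1
      subst hs0; subst ht0
      rw [real_inner_self_eq_norm_sq, h.unit, sub_self, Real.cos_zero]; norm_num
    | succ n ih =>
      have hcast : ((n:ℝ) + 1) * δ = n * δ + δ := by ring
      have step : ∀ s ∈ Icc (0:ℝ) L, ∀ t ∈ Icc (0:ℝ) L, s ≤ (n + 1 : ℕ) * δ →
          t ≤ (n + 1 : ℕ) * δ → s ≤ t → ⟪Ψ (γ s), Ψ (γ t)⟫ = Real.cos (s - t) := by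
        intro s hs t ht hsn htn hst
        push_cast at hsn htn
        rw [hcast] at hsn htn
        by_cases htμ : t ≤ n * δ
        · exact ih s hs t ht (le_trans hst htμ) htμ
        push_neg at htμ
        have hμL : (n:ℝ) * δ < L := lt_of_lt_of_le htμ ht.2
        have hμmem : (n:ℝ) * δ ∈ Icc (0:ℝ) L := ⟨by positivity, le_of_lt hμL⟩
        have htclose : |t - n * δ| ≤ δ := by rw [abs_le]; constructor <;> linarith
        by_cases hsα : (n:ℝ) * δ - δ ≤ s
        · have hsclose : |s - n * δ| ≤ δ := by rw [abs_le]; constructor <;> linarith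
          exact hloc ((n:ℝ) * δ) hμmem s hs t ht hsclose htclose
        · push_neg at hsα
          have hα0 : (0:ℝ) ≤ (n:ℝ) * δ - δ := le_trans hs.1 (le_of_lt hsα)
          have hαmem : (n:ℝ) * δ - δ ∈ Icc (0:ℝ) L := ⟨hα0, by linarith⟩
          have hsμ : s ≤ (n:ℝ) * δ := by linarith
          have hαclose : |((n:ℝ) * δ - δ) - n * δ| ≤ δ := by
            rw [show ((n:ℝ) * δ - δ) - n * δ = -δ by ring, abs_neg, abs_of_pos hδpos]
          refine StarHyp.four_point (Ψ (γ s)) (Ψ (γ ((n:ℝ) * δ - δ))) (Ψ (γ ((n:ℝ) * δ)))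
            (Ψ (γ t)) s ((n:ℝ) * δ - δ) ((n:ℝ) * δ) t (h.unit _) (h.unit _) (h.unit _)
            (by linarith) (by rw [show (n:ℝ) * δ - ((n:ℝ) * δ - δ) = δ by ring]; exact hδπ)
            (ih s hs _ hαmem hsμ (by linarith))
            (ih s hs _ hμmem hsμ (le_refl _))
            (ih _ hαmem _ hμmem (by linarith) (le_refl _))
            (hloc ((n:ℝ) * δ) hμmem t ht _ hαmem htclose hαclose)
            (hloc ((n:ℝ) * δ) hμmem t ht _ hμmem htclose
              (by simp [abs_of_nonneg, le_of_lt hδpos]))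
      intro s hs t ht hsn htn
      rcases le_total s t with hst | hts
      · exact step s hs t ht hsn htn hst
      · rw [real_inner_comm, show s - t = -(t - s) by ring, Real.cos_neg]
        exact step t ht s hs htn hsn hts
  obtain ⟨n, hn⟩ := exists_nat_ge (L / δ)
  have hLn : L ≤ n * δ := by
    rw [div_le_iff₀ hδpos] at hn; linarith
  have hfin := hmain n 0 h0mem L hLmem (le_trans hL0 hLn) hLn
  rw [hγ0, hγL, show (0:ℝ) - L = -L by ring, Real.cos_neg] at hfin
  exact hfin.symm

/-- Under the standing hypotheses (★), the map `Ψ : X → S` is injective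
(the fibers of the moment map are connected). -/
theorem starHyp_injective
    {E : Type*} [NormedAddCommGroup E] [InnerProductSpace ℝ E]
    {X : Type*} [MetricSpace X] (Ψ : X → E) (h : StarHyp E X Ψ) :
    Function.Injective Ψ := by
  intro x y hxy
  by_contra hne
  haveI := h.finiteDim
  obtain ⟨γ, hγ0, hγL, hgeo⟩ := h.geodesicSpace x y
  set L := dist x y with hLdef
  have hLpos : 0 < L := dist_pos.mpr hne
  have hL0 : (0:ℝ) ≤ L := le_of_lt hLpos
  have h0mem : (0:ℝ) ∈ Icc (0:ℝ) L := ⟨le_refl _, hL0⟩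
  have hLmem : L ∈ Icc (0:ℝ) L := ⟨hL0, le_refl _⟩
  set u := Ψ x with hudef
  have hu1 : ‖u‖ = 1 := h.unit x
  have hyu : Ψ y = u := hxy.symm
  have huu : ⟪u, u⟫ = 1 := by rw [real_inner_self_eq_norm_sq, hu1]; norm_num
  have hπ := Real.pi_pos
  have hcosL : Real.cos L = 1 := by
    have hc := h.cos_dist x y
    rw [← hudef, hyu, huu] at hc
    exact hc
  have hL2π : 2 * π ≤ L := by
    obtain ⟨n, hn⟩ := (Real.cos_eq_one_iff L).mp hcosL
    have hn1 : (1:ℝ) ≤ (n:ℝ) := by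
      by_contra hlt
      push_neg at hlt
      have hn0 : (n:ℤ) ≤ 0 := by
        have : (n:ℤ) < 1 := by exact_mod_cast hlt
        omega
      have : (n:ℝ) ≤ 0 := by exact_mod_cast hn0
      nlinarith
    nlinarith
  have hid : ∀ s ∈ Icc (0:ℝ) L, ∀ t ∈ Icc (0:ℝ) L,
      ⟪Ψ (γ s), Ψ (γ t)⟫ = Real.cos (s - t) := by
    intro s hs t ht
    rw [← h.cos_dist (γ s) (γ t), hgeo s hs t ht, Real.cos_abs]
  have hπ2mem : π/2 ∈ Icc (0:ℝ) L := ⟨by positivity, by nlinarith⟩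
  set q := Ψ (γ (π/2)) with hqdef
  have hq1 : ‖q‖ = 1 := h.unit _
  have huq : ⟪u, q⟫ = 0 := by
    have hc := hid 0 h0mem (π/2) hπ2mem
    rw [hγ0, ← hudef, zero_sub, Real.cos_neg, Real.cos_pi_div_two] at hc
    exact hc
  have hqu : ⟪q, u⟫ = 0 := by rw [real_inner_comm]; exact huq
  have hplane : ∀ s ∈ Icc (0:ℝ) L, Ψ (γ s) = Real.cos s • u + Real.sin s • q := by
    intro s hs
    have h1 : ⟪Ψ (γ s), u⟫ = Real.cos s := by
      have hc := hid s hs 0 h0mem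
      rw [hγ0, ← hudef, sub_zero] at hc
      exact hc
    have h2 : ⟪Ψ (γ s), q⟫ = Real.sin s := by
      have hc := hid s hs (π/2) hπ2mem
      rw [← hqdef, Real.cos_sub_pi_div_two] at hc
      exact hc
    have h1c : ⟪u, Ψ (γ s)⟫ = Real.cos s := by rw [real_inner_comm]; exact h1
    have h2c : ⟪q, Ψ (γ s)⟫ = Real.sin s := by rw [real_inner_comm]; exact h2
    rw [← sub_eq_zero, ← inner_self_eq_zero (𝕜 := ℝ)]
    simp only [inner_sub_left, inner_sub_right, inner_add_left, inner_add_right,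
      real_inner_smul_left, real_inner_smul_right]
    rw [real_inner_self_eq_norm_sq (Ψ (γ s)), h.unit, real_inner_self_eq_norm_sq u, hu1,
      real_inner_self_eq_norm_sq q, hq1, h1, h2, h1c, h2c, huq, hqu]
    nlinarith [Real.sin_sq_add_cos_sq s]
  have hune : u ≠ 0 := by
    intro hz; rw [hz, norm_zero] at hu1; norm_num at hu1
  have hyinner : 0 < ⟪Ψ y, u⟫ := by rw [hyu, huu]; norm_num
  obtain ⟨f₀, hf₀mem, ε, hε, hball⟩ := h.image_interior u hune y hyinner
  have hf₀1 : ‖f₀‖ = 1 := by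
    obtain ⟨z₀, -, hz₀⟩ := hf₀mem
    rw [← hz₀]; exact h.unit _
  -- choose a unit vector `v` in the image, not lying in the plane spanned by `u`, `q`
  obtain ⟨v, hvmem, hvlt⟩ : ∃ v : E,
      v ∈ Ψ '' pathComponentIn (Ψ ⁻¹' {f : E | 0 < ⟪f, u⟫}) y ∧
      ⟪v, u⟫ ^ 2 + ⟪v, q⟫ ^ 2 < 1 := by
    set a0 := ⟪f₀, u⟫ with ha0
    set b0 := ⟪f₀, q⟫ with hb0
    have ha0c : ⟪u, f₀⟫ = a0 := by rw [ha0, real_inner_comm]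
    have hb0c : ⟪q, f₀⟫ = b0 := by rw [hb0, real_inner_comm]
    have hw0 : ‖f₀ - a0 • u - b0 • q‖ ^ 2 = 1 - a0 ^ 2 - b0 ^ 2 := by
      rw [← real_inner_self_eq_norm_sq]
      simp only [inner_sub_left, inner_sub_right, inner_add_left, inner_add_right,
        real_inner_smul_left, real_inner_smul_right]
      rw [real_inner_self_eq_norm_sq f₀, hf₀1, real_inner_self_eq_norm_sq u, hu1,
        real_inner_self_eq_norm_sq q, hq1, ha0c, hb0c, huq, hqu]
      ring
    by_cases hcase : f₀ - a0 • u - b0 • q = 0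
    · have hab : a0 ^ 2 + b0 ^ 2 = 1 := by
        rw [hcase, norm_zero] at hw0
        nlinarith [hw0]
      have hf₀eq : f₀ = a0 • u + b0 • q := by
        have h' := hcase
        rw [sub_sub, sub_eq_zero] at h'
        exact h'
      -- find a unit vector orthogonal to u and q
      obtain ⟨e, he1, heu, heq⟩ : ∃ e : E, ‖e‖ = 1 ∧ ⟪u, e⟫ = 0 ∧ ⟪q, e⟫ = 0 := by
        classical
        set K := Submodule.span ℝ ({u, q} : Set E) with hK
        have hcard : ({u, q} : Set E).toFinset.card ≤ 2 := by
          rw [Set.toFinset_insert, Set.toFinset_singleton]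
          exact (Finset.card_insert_le _ _).trans (by simp)
        have hKfin : Module.finrank ℝ K ≤ 2 := (finrank_span_le_card _).trans hcard
        have horth := Submodule.finrank_add_finrank_orthogonal K
        have hKbot : Kᗮ ≠ ⊥ := by
          intro hbot
          rw [hbot, finrank_bot] at horth
          have hd := h.dim
          omega
        obtain ⟨e₀, he₀K, he₀ne⟩ := (Submodule.ne_bot_iff _).mp hKbot
        have huK : u ∈ K := Submodule.subset_span (by simp)
        have hqK : q ∈ K := Submodule.subset_span (by simp)
        refine ⟨‖e₀‖⁻¹ • e₀, norm_smul_inv_norm he₀ne, ?_, ?_⟩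
        · rw [real_inner_smul_right,
            Submodule.inner_right_of_mem_orthogonal huK he₀K, mul_zero]
        · rw [real_inner_smul_right,
            Submodule.inner_right_of_mem_orthogonal hqK he₀K, mul_zero]
      have hfe : ⟪f₀, e⟫ = 0 := by
        rw [hf₀eq, inner_add_left, real_inner_smul_left, real_inner_smul_left, heu, heq]
        ring
      set θ := min (ε/2) (π/2) with hθdef
      have hθpos : 0 < θ := lt_min (by linarith) (by linarith)
      have hθπ2 : θ ≤ π/2 := min_le_right _ _
      have hsinθpos : 0 < Real.sin θ := Real.sin_pos_of_pos_of_lt_pi hθpos (by linarith)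
      have hsinlt : Real.sin θ < θ := Real.sin_lt hθpos
      have hcos1 : Real.cos θ ≤ 1 := Real.cos_le_one θ
      have hcosnn : 0 ≤ Real.cos θ := Real.cos_nonneg_of_mem_Icc ⟨by linarith, hθπ2⟩
      have h1mc : 1 - Real.cos θ ≤ Real.sin θ := by
        nlinarith [Real.sin_sq_add_cos_sq θ, Real.sin_le_one θ]
      set v := Real.cos θ • f₀ + Real.sin θ • e with hv
      have hfec : ⟪e, f₀⟫ = 0 := by rw [real_inner_comm]; exact hfe
      have hv1 : ‖v‖ = 1 := by
        have hsq : ‖v‖^2 = 1 := by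
          rw [← real_inner_self_eq_norm_sq, hv]
          simp only [inner_add_left, inner_add_right, real_inner_smul_left,
            real_inner_smul_right]
          rw [real_inner_self_eq_norm_sq f₀, hf₀1, real_inner_self_eq_norm_sq e, he1,
            hfe, hfec]
          nlinarith [Real.sin_sq_add_cos_sq θ]
        nlinarith [norm_nonneg v]
      have hvf : ‖v - f₀‖ < ε := by
        have hvr : v - f₀ = (Real.cos θ - 1) • f₀ + Real.sin θ • e := by
          rw [hv, sub_smul, one_smul]; abel
        rw [hvr]
        have hθε : θ ≤ ε / 2 := min_le_left _ _
        calc ‖(Real.cos θ - 1) • f₀ + Real.sin θ • e‖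
            ≤ ‖(Real.cos θ - 1) • f₀‖ + ‖Real.sin θ • e‖ := norm_add_le _ _
          _ = |Real.cos θ - 1| + |Real.sin θ| := by
              rw [norm_smul, norm_smul, hf₀1, he1, mul_one, mul_one, Real.norm_eq_abs,
                Real.norm_eq_abs]
          _ = (1 - Real.cos θ) + Real.sin θ := by
              rw [abs_of_nonpos (by linarith), abs_of_nonneg (le_of_lt hsinθpos)]; ring
          _ ≤ 2 * Real.sin θ := by linarith
          _ < 2 * θ := by linarith
          _ ≤ ε := by linarith
      refine ⟨v, hball v hv1 hvf, ?_⟩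
      have heu' : ⟪e, u⟫ = 0 := by rw [real_inner_comm]; exact heu
      have heq' : ⟪e, q⟫ = 0 := by rw [real_inner_comm]; exact heq
      have hvu : ⟪v, u⟫ = Real.cos θ * a0 := by
        rw [hv, inner_add_left, real_inner_smul_left, real_inner_smul_left, heu', ← ha0]
        ring
      have hvq : ⟪v, q⟫ = Real.cos θ * b0 := by
        rw [hv, inner_add_left, real_inner_smul_left, real_inner_smul_left, heq', ← hb0]
        ring
      rw [hvu, hvq]
      nlinarith [Real.sin_sq_add_cos_sq θ]
    · refine ⟨f₀, hf₀mem, ?_⟩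
      have hpos : 0 < ‖f₀ - a0 • u - b0 • q‖ ^ 2 := by
        have := norm_pos_iff.mpr hcase
        positivity
      nlinarith [hw0]
  -- the preimage point z of v
  obtain ⟨z, hzN, hzv⟩ := hvmem
  have hzu : 0 < ⟪v, u⟫ := by
    have hsub := pathComponentIn_subset hzN
    rw [Set.mem_preimage, Set.mem_setOf_eq, hzv] at hsub
    exact hsub
  have hymem : y ∈ pathComponentIn (Ψ ⁻¹' {f : E | 0 < ⟪f, u⟫}) y :=
    mem_pathComponentIn_self (by rw [Set.mem_preimage, Set.mem_setOf_eq]; exact hyinner)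
  obtain ⟨-, hdzy⟩ := h.isometric u hune y hyinner z hzN y hymem
  rw [hzv, hyu] at hdzy
  have hdzyle : dist z y ≤ π/2 := by
    rw [hdzy]; exact Real.arccos_le_pi_div_two.mpr (le_of_lt hzu)
  -- clamp the geodesic parameter
  set ρ : ℝ → ℝ := fun s => max 0 (min s L) with hρdef
  have hρc : Continuous ρ := continuous_const.max (continuous_id.min continuous_const)
  have hρmem : ∀ s, ρ s ∈ Icc (0:ℝ) L :=
    fun s => ⟨le_max_left _ _, max_le hL0 (min_le_right _ _)⟩
  have hρ0 : ρ 0 = 0 := by rw [hρdef]; simp [min_eq_left hL0]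
  have hρL : ρ L = L := by rw [hρdef]; simp [hL0]
  have hγc : ContinuousOn γ (Icc 0 L) := by
    apply LipschitzOnWith.continuousOn (K := 1)
    apply LipschitzOnWith.of_dist_le_mul
    intro s hs t ht
    rw [hgeo s hs t ht, Real.dist_eq]
    simp
  have hΓc : Continuous fun s => γ (ρ s) := hγc.comp_continuous hρc hρmem
  set D : ℝ → ℝ := fun s => dist z (γ (ρ s)) with hDdef
  set G : ℝ → ℝ := fun s => ⟪v, Ψ (γ (ρ s))⟫ with hGdef
  have hGc : Continuous G := continuous_const.inner (h.cont.comp hΓc)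
  have hDc : Continuous D := continuous_const.dist hΓc
  have hGlt : ∀ s, G s ^ 2 < 1 := by
    intro s
    have := hplane (ρ s) (hρmem s)
    rw [hGdef]
    simp only [this, inner_add_right, real_inner_smul_right]
    nlinarith [Real.sin_sq_add_cos_sq (ρ s),
      sq_nonneg (⟪v, u⟫ * Real.sin (ρ s) - ⟪v, q⟫ * Real.cos (ρ s))]
  set hh : ℝ → ℝ := fun s => Real.arccos (G s) with hhdef
  have hhc : Continuous hh := Real.continuous_arccos.comp hGc
  have hGabs : ∀ s, |G s| < 1 := fun s => (sq_lt_one_iff_abs_lt_one (G s)).mp (hGlt s)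
  have hcoshh : ∀ s, Real.cos (hh s) = G s := by
    intro s
    have hb := abs_lt.mp (hGabs s)
    simp only [hhdef]
    exact Real.cos_arccos (le_of_lt hb.1) (le_of_lt hb.2)
  have hcosD : ∀ s, Real.cos (D s) = G s := by
    intro s
    have hc := h.cos_dist z (γ (ρ s))
    rw [hzv] at hc
    exact hc
  have hh0 : ∀ s, 0 < hh s := by
    intro s
    have hb := abs_lt.mp (hGabs s)
    simp only [hhdef]
    exact Real.arccos_pos.mpr hb.2
  have hhπ : ∀ s, hh s < π := by
    intro s
    have hb := abs_lt.mp (hGabs s)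
    simp only [hhdef]
    rcases lt_or_eq_of_le (Real.arccos_le_pi (G s)) with hlt | heqq
    · exact hlt
    · exfalso
      have := Real.arccos_eq_pi.mp heqq
      linarith [hb.1]
  have hprod : ∀ s : ℝ, Real.sin ((D s - hh s)/2) = 0 ∨ Real.sin ((D s + hh s)/2) = 0 := by
    intro s
    have hzero : Real.cos (D s) - Real.cos (hh s) = 0 := by rw [hcosD, hcoshh, sub_self]
    rw [Real.cos_sub_cos] at hzero
    rcases mul_eq_zero.mp hzero with h' | h'
    · rcases mul_eq_zero.mp h' with h'' | h''
      · norm_num at h''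
      · right; exact h''
    · left; exact h'
  have hdisj : ∀ s : ℝ,
      ¬(Real.sin ((D s - hh s)/2) = 0 ∧ Real.sin ((D s + hh s)/2) = 0) := by
    rintro s ⟨hA, hB⟩
    obtain ⟨m, hm⟩ := Real.sin_eq_zero_iff.mp hA
    obtain ⟨k, hk⟩ := Real.sin_eq_zero_iff.mp hB
    have hkm : ((k - m : ℤ) : ℝ) * π = hh s := by push_cast; linarith
    have h0' := hh0 s
    have hπ' := hhπ s
    have hlow : (0:ℝ) < ((k - m : ℤ) : ℝ) := by nlinarith
    have hhigh : ((k - m : ℤ) : ℝ) < 1 := by nlinarith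
    have h1' : 0 < (k - m : ℤ) := by exact_mod_cast hlow
    have h2' : (k - m : ℤ) < 1 := by exact_mod_cast hhigh
    omega
  have hone : (∀ s ∈ Icc (0:ℝ) L, Real.sin ((D s - hh s)/2) = 0) ∨
      (∀ s ∈ Icc (0:ℝ) L, Real.sin ((D s + hh s)/2) = 0) := by
    by_contra hcon
    push_neg at hcon
    obtain ⟨⟨s₁, hs₁, hs₁n⟩, ⟨s₂, hs₂, hs₂n⟩⟩ := hcon
    have hclosed₁ : IsClosed {s : ℝ | Real.sin ((D s - hh s)/2) = 0} :=
      isClosed_eq (Real.continuous_sin.comp ((hDc.sub hhc).div_const 2)) continuous_const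
    have hclosed₂ : IsClosed {s : ℝ | Real.sin ((D s + hh s)/2) = 0} :=
      isClosed_eq (Real.continuous_sin.comp ((hDc.add hhc).div_const 2)) continuous_const
    obtain ⟨s₃, -, h₃⟩ := isPreconnected_closed_iff.mp isPreconnected_Icc _ _
      hclosed₁ hclosed₂ (fun s _ => (hprod s).elim Or.inl Or.inr)
      ⟨s₂, hs₂, (hprod s₂).resolve_right hs₂n⟩
      ⟨s₁, hs₁, (hprod s₁).resolve_left hs₁n⟩
    exact hdisj s₃ h₃
  have hhh0L : hh L = hh 0 := by
    rw [hhdef]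
    simp only [hGdef]
    rw [hρ0, hρL, hγ0, hγL, hyu, ← hudef]
  have hπne : (2:ℝ) * π ≠ 0 := by positivity
  have hDL : D L = D 0 := by
    rcases hone with hsub | hsub
    · have hc := StarHyp.int_valued_eq (f := fun s => (D s - hh s)/(2*π)) hL0
        (((hDc.sub hhc).div_const (2*π)).continuousOn) ?_
      · field_simp at hc
        linarith [hhh0L, hc]
      · intro s hs
        obtain ⟨m, hm⟩ := Real.sin_eq_zero_iff.mp (hsub s hs)
        exact ⟨m, by field_simp; linarith⟩
    · have hc := StarHyp.int_valued_eq (f := fun s => (D s + hh s)/(2*π)) hL0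
        (((hDc.add hhc).div_const (2*π)).continuousOn) ?_
      · field_simp at hc
        linarith [hhh0L, hc]
      · intro s hs
        obtain ⟨m, hm⟩ := Real.sin_eq_zero_iff.mp (hsub s hs)
        exact ⟨m, by field_simp; linarith⟩
  have hD0x : D 0 = dist z x := by rw [hDdef]; simp only [hρ0, hγ0]
  have hDLy : D L = dist z y := by rw [hDdef]; simp only [hρL, hγL]
  have htri : L ≤ dist x z + dist z y := dist_triangle x z y
  rw [dist_comm x z] at htri
  have : L ≤ 2 * dist z y := by
    have := hDL
    rw [hD0x, hDLy] at this
    linarith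
  linarith
end
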